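/- arXiv:2103.12392 — 12 statements merged into one kernel-verified Lean document; each statement's English description precedes it below -/
import Mathlib

section
/- Let n ≥ 1 and let g, h₁, h₂, ρ₁, ρ₂ be positive real numbers and u₁, u₂ ∈ ℝⁿ. For ξ ∈ ℝⁿ \ {0} consider the quadratic polynomial in ω: q_ξ(ω) = (ρ₁ coth(h₁|ξ|) + ρ₂ coth(h₂|ξ|)) ω² + 2(ρ₁ (ξ·u₁) coth(h₁|ξ|) + ρ₂ (ξ·u₂) coth(h₂|ξ|)) ω + ρ₁ (ξ·u₁)² coth(h₁|ξ|) + ρ₂ (ξ·u₂)² coth(h₂|ξ|) − (ρ₂ − ρ₁) g |ξ|. Then every complex root ω of q_ξ is real for every ξ ∈ ℝⁿ \ {0} if and only if u₁ = u₂ and ρ₂ ≥ ρ₁. -/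
open scoped RealInnerProductSpace

/-- The hyperbolic cotangent `coth x = cosh x / sinh x`. -/
noncomputable def Real.coth (x : ℝ) : ℝ := Real.cosh x / Real.sinh x

lemma aux_sinh_pos {x : ℝ} (h : 0 < x) : 0 < Real.sinh x := Real.sinh_pos_iff.mpr h

lemma aux_one_lt_coth {x : ℝ} (hx : 0 < x) : 1 < Real.coth x := by
  rw [Real.coth, lt_div_iff₀ (aux_sinh_pos hx), one_mul]
  exact Real.sinh_lt_cosh x

lemma aux_coth_le {x : ℝ} (hx : 0 < x) : Real.coth x ≤ 1 + 1/x := by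
  rw [Real.coth, div_le_iff₀ (aux_sinh_pos hx), Real.cosh_eq, Real.sinh_eq]
  set E := Real.exp x with hE
  have h1 : Real.exp (-x) = E⁻¹ := Real.exp_neg x
  have h4 : (0:ℝ) < E := Real.exp_pos x
  have h2 : (2*x) + 1 ≤ E * E := by
    calc 2*x + 1 ≤ Real.exp (2*x) := Real.add_one_le_exp (2*x)
    _ = E * E := by rw [hE, ← Real.exp_add]; ring_nf
  have h5 : E * E⁻¹ = 1 := mul_inv_cancel₀ (ne_of_gt h4)
  rw [h1]
  have key : x * (E + E⁻¹) ≤ (x + 1) * (E - E⁻¹) := by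
    nlinarith [mul_pos h4 hx, inv_pos.mpr h4]
  have h1x : (1:ℝ) + 1/x = (x+1)/x := by field_simp
  rw [h1x, div_mul_div_comm, div_le_div_iff₀ (by norm_num) (by positivity)]
  nlinarith

lemma aux_real_roots_of_disc {a b c : ℝ} (ha : 0 < a) (hd : 0 ≤ b^2 - a*c)
    (ω : ℂ) (h : (a:ℂ)*ω^2 + 2*(b:ℂ)*ω + (c:ℂ) = 0) : ω.im = 0 := by
  have hre := congrArg Complex.re h
  have him := congrArg Complex.im h
  simp [Complex.add_re, Complex.add_im, Complex.mul_re, Complex.mul_im, pow_two] at hre him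
  by_contra hy
  have h7 : a * ω.re = -b := by
    rcases mul_eq_zero.mp (show ω.im * (2*(a * ω.re + b)) = 0 by linarith) with h' | h'
    · exact absurd h' hy
    · linarith
  have h6 : a * (a * (ω.re * ω.re - ω.im * ω.im) + 2 * b * ω.re + c) = a * 0 := by rw [hre]
  have h8 : (a*ω.re)*(a*ω.re) = b*b := by rw [h7]; ring
  have h9 : b*(a*ω.re) = -b*b := by rw [h7]; ring
  have hy2 : ω.im ^ 2 ≤ 0 := by nlinarith [h6, h8, h9, mul_pos ha ha]
  exact hy (pow_eq_zero_iff (two_ne_zero) |>.mp (le_antisymm hy2 (sq_nonneg _)))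

lemma aux_exists_nonreal_root {a b c : ℝ} (ha : 0 < a) (hd : b^2 - a*c < 0) :
    ∃ ω : ℂ, (a:ℂ)*ω^2 + 2*(b:ℂ)*ω + (c:ℂ) = 0 ∧ ω.im ≠ 0 := by
  refine ⟨⟨-b/a, Real.sqrt (a*c - b^2)/a⟩, ?_, ?_⟩
  · have hs : Real.sqrt (a*c - b*b) * Real.sqrt (a*c - b*b) = a*c - b*b := by
      refine Real.mul_self_sqrt (by nlinarith)
    apply Complex.ext
    · simp [Complex.mul_re, Complex.mul_im, pow_two]
      field_simp
      linear_combination (-1 : ℝ) * Real.sq_sqrt (show (0:ℝ) ≤ a*c - b^2 by nlinarith)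
    · simp [Complex.mul_re, Complex.mul_im, pow_two]
      field_simp
      ring
  · have : 0 < Real.sqrt (a*c-b^2) := Real.sqrt_pos.mpr (by linarith)
    simp only [ne_eq]
    positivity

set_option maxHeartbeats 1600000 in
/-- The linear dispersion relation of the full model for interfacial gravity waves around a
uniform flow has only real roots for every nonzero wave vector if and only if `u₁ = u₂` and
`ρ₂ ≥ ρ₁`. -/
theorem stmt_0 (n : ℕ) (hn : 1 ≤ n) (g h₁ h₂ ρ₁ ρ₂ : ℝ)
    (hg : 0 < g) (hh₁ : 0 < h₁) (hh₂ : 0 < h₂) (hρ₁ : 0 < ρ₁) (hρ₂ : 0 < ρ₂)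
    (u₁ u₂ : EuclideanSpace ℝ (Fin n)) :
    (∀ ξ : EuclideanSpace ℝ (Fin n), ξ ≠ 0 → ∀ ω : ℂ,
        ((ρ₁ * Real.coth (h₁ * ‖ξ‖) + ρ₂ * Real.coth (h₂ * ‖ξ‖) : ℝ) : ℂ) * ω ^ 2
          + 2 * ((ρ₁ * ⟪ξ, u₁⟫ * Real.coth (h₁ * ‖ξ‖)
              + ρ₂ * ⟪ξ, u₂⟫ * Real.coth (h₂ * ‖ξ‖) : ℝ) : ℂ) * ω
          + ((ρ₁ * ⟪ξ, u₁⟫ ^ 2 * Real.coth (h₁ * ‖ξ‖)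
              + ρ₂ * ⟪ξ, u₂⟫ ^ 2 * Real.coth (h₂ * ‖ξ‖)
              - (ρ₂ - ρ₁) * g * ‖ξ‖ : ℝ) : ℂ) = 0 → ω.im = 0)
      ↔ (u₁ = u₂ ∧ ρ₁ ≤ ρ₂) := by
  constructor
  · intro H
    -- first: ρ₁ ≤ ρ₂
    have hρle : ρ₁ ≤ ρ₂ := by
      by_contra hlt
      push_neg at hlt
      set ξ : EuclideanSpace ℝ (Fin n) := EuclideanSpace.single (⟨0, hn⟩ : Fin n) (1:ℝ) with hξdef
      have hξnorm : ‖ξ‖ = 1 := by simp [hξdef, EuclideanSpace.norm_single]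
      have hξ : ξ ≠ 0 := by
        intro h0; rw [h0, norm_zero] at hξnorm; norm_num at hξnorm
      have hN : (0:ℝ) < ‖ξ‖ := by rw [hξnorm]; norm_num
      set c₁ := Real.coth (h₁ * ‖ξ‖) with hc₁def
      set c₂ := Real.coth (h₂ * ‖ξ‖) with hc₂def
      set s₁ := (⟪ξ, u₁⟫ : ℝ) with hs₁def
      set s₂ := (⟪ξ, u₂⟫ : ℝ) with hs₂def
      have hc₁ : 1 < c₁ := aux_one_lt_coth (mul_pos hh₁ hN)
      have hc₂ : 1 < c₂ := aux_one_lt_coth (mul_pos hh₂ hN)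
      have ha : 0 < ρ₁ * c₁ + ρ₂ * c₂ := by nlinarith
      have hd : (ρ₁ * s₁ * c₁ + ρ₂ * s₂ * c₂)^2
          - (ρ₁ * c₁ + ρ₂ * c₂) * (ρ₁ * s₁^2 * c₁ + ρ₂ * s₂^2 * c₂ - (ρ₂ - ρ₁) * g * ‖ξ‖) < 0 := by
        have hid : (ρ₁ * s₁ * c₁ + ρ₂ * s₂ * c₂)^2
            - (ρ₁ * c₁ + ρ₂ * c₂) * (ρ₁ * s₁^2 * c₁ + ρ₂ * s₂^2 * c₂ - (ρ₂ - ρ₁) * g * ‖ξ‖)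
            = -(ρ₁*ρ₂*c₁*c₂*(s₁-s₂)^2) + (ρ₁*c₁+ρ₂*c₂)*(ρ₂-ρ₁)*(g*‖ξ‖) := by ring
        rw [hid]
        have h1 : 0 ≤ ρ₁*ρ₂*c₁*c₂*(s₁-s₂)^2 := by positivity
        have h2 : (ρ₁*c₁+ρ₂*c₂)*(ρ₂-ρ₁)*(g*‖ξ‖) < 0 := by
          apply mul_neg_of_neg_of_pos _ (by positivity)
          exact mul_neg_of_pos_of_neg ha (by linarith)
        linarith
      obtain ⟨ω, hω, hωim⟩ := aux_exists_nonreal_root ha hd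
      exact hωim (H ξ hξ ω hω)
    refine ⟨?_, hρle⟩
    -- second: u₁ = u₂
    by_contra hne
    have hv : u₁ - u₂ ≠ 0 := sub_ne_zero.mpr hne
    set v := u₁ - u₂ with hvdef
    have hvn : (0:ℝ) < ‖v‖ := norm_pos_iff.mpr hv
    set M : ℝ := (ρ₁*(1+1/(h₁*‖v‖)) + ρ₂*(1+1/(h₂*‖v‖)))*(ρ₂-ρ₁)*g with hMdef
    have hM : 0 ≤ M := by
      apply mul_nonneg _ hg.le
      apply mul_nonneg _ (by linarith)
      have : 0 < 1 + 1/(h₁*‖v‖) := by positivity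
      have : 0 < 1 + 1/(h₂*‖v‖) := by positivity
      positivity
    set t : ℝ := max 1 (M/(ρ₁*ρ₂*‖v‖^3) + 1) with htdef
    have ht1 : (1:ℝ) ≤ t := le_max_left _ _
    have ht0 : (0:ℝ) < t := lt_of_lt_of_le one_pos ht1
    have htM : M < ρ₁*ρ₂*‖v‖^3 * t := by
      have h' : M/(ρ₁*ρ₂*‖v‖^3) + 1 ≤ t := le_max_right _ _
      have h'' : M/(ρ₁*ρ₂*‖v‖^3) < t := by linarith
      rw [div_lt_iff₀ (by positivity)] at h''
      linarith [h'']
    set ξ : EuclideanSpace ℝ (Fin n) := t • v with hξdef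
    have hξ : ξ ≠ 0 := smul_ne_zero (ne_of_gt ht0) hv
    have hξnorm : ‖ξ‖ = t * ‖v‖ := by
      rw [hξdef, norm_smul, Real.norm_eq_abs, abs_of_pos ht0]
    have hN : (0:ℝ) < ‖ξ‖ := by rw [hξnorm]; positivity
    have hsdiff : (⟪ξ, u₁⟫ : ℝ) - ⟪ξ, u₂⟫ = t * ‖v‖^2 := by
      rw [← inner_sub_right, ← hvdef, hξdef, real_inner_smul_left,
        real_inner_self_eq_norm_sq]
    clear_value ξ
    clear hξdef
    clear_value v t M
    set c₁ := Real.coth (h₁ * ‖ξ‖) with hc₁def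
    set c₂ := Real.coth (h₂ * ‖ξ‖) with hc₂def
    set s₁ := (⟪ξ, u₁⟫ : ℝ) with hs₁def
    set s₂ := (⟪ξ, u₂⟫ : ℝ) with hs₂def
    have hc₁ : 1 < c₁ := aux_one_lt_coth (mul_pos hh₁ hN)
    have hc₂ : 1 < c₂ := aux_one_lt_coth (mul_pos hh₂ hN)
    have hc₁' : c₁ ≤ 1 + 1/(h₁*‖v‖) := by
      refine (aux_coth_le (mul_pos hh₁ hN)).trans ?_
      have : h₁ * ‖v‖ ≤ h₁ * ‖ξ‖ := by
        rw [hξnorm]; nlinarith [mul_nonneg (mul_nonneg hh₁.le (sub_nonneg.mpr ht1)) hvn.le]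
      have h1 : 1/(h₁*‖ξ‖) ≤ 1/(h₁*‖v‖) := by
        apply one_div_le_one_div_of_le (by positivity) this
      linarith
    have hc₂' : c₂ ≤ 1 + 1/(h₂*‖v‖) := by
      refine (aux_coth_le (mul_pos hh₂ hN)).trans ?_
      have : h₂ * ‖v‖ ≤ h₂ * ‖ξ‖ := by
        rw [hξnorm]; nlinarith [mul_nonneg (mul_nonneg hh₂.le (sub_nonneg.mpr ht1)) hvn.le]
      have h1 : 1/(h₂*‖ξ‖) ≤ 1/(h₂*‖v‖) := by
        apply one_div_le_one_div_of_le (by positivity) this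
      linarith
    have ha : 0 < ρ₁ * c₁ + ρ₂ * c₂ := by nlinarith
    have hd : (ρ₁ * s₁ * c₁ + ρ₂ * s₂ * c₂)^2
        - (ρ₁ * c₁ + ρ₂ * c₂) * (ρ₁ * s₁^2 * c₁ + ρ₂ * s₂^2 * c₂ - (ρ₂ - ρ₁) * g * ‖ξ‖) < 0 := by
      have hid : (ρ₁ * s₁ * c₁ + ρ₂ * s₂ * c₂)^2
          - (ρ₁ * c₁ + ρ₂ * c₂) * (ρ₁ * s₁^2 * c₁ + ρ₂ * s₂^2 * c₂ - (ρ₂ - ρ₁) * g * ‖ξ‖)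
          = -(ρ₁*ρ₂*c₁*c₂*(s₁-s₂)^2) + (ρ₁*c₁+ρ₂*c₂)*((ρ₂-ρ₁)*g)*‖ξ‖ := by ring
      rw [hid, hsdiff, hξnorm]
      have step1 : (ρ₁*c₁+ρ₂*c₂)*((ρ₂-ρ₁)*g) ≤ M := by
        rw [hMdef]
        have hr : 0 ≤ (ρ₂-ρ₁)*g := mul_nonneg (by linarith) hg.le
        nlinarith [mul_nonneg (mul_nonneg hρ₁.le (sub_nonneg.mpr hc₁')) hr,
          mul_nonneg (mul_nonneg hρ₂.le (sub_nonneg.mpr hc₂')) hr]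
      have htv : (0:ℝ) < t*‖v‖ := by positivity
      have step1' : (ρ₁*c₁+ρ₂*c₂)*((ρ₂-ρ₁)*g)*(t*‖v‖) ≤ M*(t*‖v‖) :=
        mul_le_mul_of_nonneg_right step1 htv.le
      have step2 : M*(t*‖v‖) < ρ₁*ρ₂*(t*‖v‖^2)^2 := by
        have := mul_lt_mul_of_pos_right htM htv
        nlinarith [this]
      have hcc : 1 ≤ c₁*c₂ := by nlinarith
      have step3 : ρ₁*ρ₂*(t*‖v‖^2)^2 ≤ ρ₁*ρ₂*c₁*c₂*(t*‖v‖^2)^2 := by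
        nlinarith [mul_nonneg (mul_nonneg (mul_pos hρ₁ hρ₂).le (sub_nonneg.mpr hcc))
          (sq_nonneg (t*‖v‖^2))]
      linarith
    obtain ⟨ω, hω, hωim⟩ := aux_exists_nonreal_root ha hd
    exact hωim (H ξ hξ ω hω)
  · rintro ⟨rfl, hρle⟩ ξ hξ ω hω
    have hN : (0:ℝ) < ‖ξ‖ := norm_pos_iff.mpr hξ
    set c₁ := Real.coth (h₁ * ‖ξ‖) with hc₁def
    set c₂ := Real.coth (h₂ * ‖ξ‖) with hc₂def
    set s := (⟪ξ, u₁⟫ : ℝ) with hsdef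
    have hc₁ : 1 < c₁ := aux_one_lt_coth (mul_pos hh₁ hN)
    have hc₂ : 1 < c₂ := aux_one_lt_coth (mul_pos hh₂ hN)
    have ha : 0 < ρ₁ * c₁ + ρ₂ * c₂ := by nlinarith
    have hd : 0 ≤ (ρ₁ * s * c₁ + ρ₂ * s * c₂)^2
        - (ρ₁ * c₁ + ρ₂ * c₂) * (ρ₁ * s^2 * c₁ + ρ₂ * s^2 * c₂ - (ρ₂ - ρ₁) * g * ‖ξ‖) := by
      have hid : (ρ₁ * s * c₁ + ρ₂ * s * c₂)^2
          - (ρ₁ * c₁ + ρ₂ * c₂) * (ρ₁ * s^2 * c₁ + ρ₂ * s^2 * c₂ - (ρ₂ - ρ₁) * g * ‖ξ‖)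
          = (ρ₁*c₁+ρ₂*c₂)*((ρ₂-ρ₁)*g)*‖ξ‖ := by ring
      rw [hid]
      have : 0 ≤ (ρ₂-ρ₁)*g := mul_nonneg (by linarith) hg.le
      positivity
    exact aux_real_roots_of_disc ha hd ω hω
end

section
/- Let N ≥ 0 be an integer and let p₀, p₁, …, p_N be integers with 0 = p₀ < p₁ < ⋯ < p_N. Define the real symmetric (N+1)×(N+1) matrices A₀ = (1/(p_i+p_j+1))_{0≤i,j≤N} and A₁ = (p_i p_j/(p_i+p_j−1))_{0≤i,j≤N}, with the convention 0/0 = 0, and for ξ ∈ ℝⁿ set 𝒜(ξ) = |ξ|² A₀ + A₁. Then for every ξ ∈ ℝⁿ with ξ ≠ 0, the symmetric matrix 𝒜(ξ) is positive definite. -/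
open Matrix MeasureTheory intervalIntegral Polynomial Finset Function Set

private lemma int_pow01 (k : ℕ) : ∫ t in (0:ℝ)..1, t ^ k = 1 / ((k : ℝ) + 1) := by
  simp [integral_pow]

/-- For `0 = p₀ < p₁ < ⋯ < p_N`, the matrix `𝒜(ξ) = |ξ|² A₀ + A₁` with
`A₀ = (1/(pᵢ+pⱼ+1))` and `A₁ = (pᵢpⱼ/(pᵢ+pⱼ−1))` is positive definite for every `ξ ≠ 0`. -/
theorem stmt_1 (n N : ℕ) (hn : 1 ≤ n) (p : Fin (N + 1) → ℕ)
    (hp0 : p 0 = 0) (hp : StrictMono p)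
    (ξ : EuclideanSpace ℝ (Fin n)) (hξ : ξ ≠ 0) :
    Matrix.PosDef
      (‖ξ‖ ^ 2 • (Matrix.of fun i j : Fin (N + 1) =>
          (1 : ℝ) / ((p i : ℝ) + (p j : ℝ) + 1))
        + Matrix.of fun i j : Fin (N + 1) =>
          ((p i : ℝ) * (p j : ℝ)) / ((p i : ℝ) + (p j : ℝ) - 1)) := by
  have hξ2 : (0:ℝ) < ‖ξ‖ ^ 2 := by
    have : ‖ξ‖ ≠ 0 := norm_ne_zero_iff.mpr hξ
    positivity
  rw [Matrix.posDef_iff_dotProduct_mulVec]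
  constructor
  · ext i j
    simp only [Matrix.conjTranspose_apply, Matrix.add_apply, Matrix.smul_apply,
      Matrix.of_apply, smul_eq_mul, star_trivial]
    ring
  intro v hv
  set f : ℝ → ℝ := fun t => ∑ i, v i * t ^ p i with hf
  set g : ℝ → ℝ := fun t => ∑ i, v i * (p i : ℝ) * t ^ (p i - 1) with hg
  have hfc : Continuous f := by fun_prop
  have hgc : Continuous g := by fun_prop
  -- integral of f^2
  have I0 : (∫ t in (0:ℝ)..1, f t ^ 2)
      = ∑ i, ∑ j, (v i * v j) * (1 / ((p i : ℝ) + (p j : ℝ) + 1)) := by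
    have hft : ∀ t : ℝ, f t ^ 2 = ∑ i, ∑ j, (v i * v j) * t ^ (p i + p j) := by
      intro t
      rw [hf, sq, Finset.sum_mul_sum]
      exact Finset.sum_congr rfl fun i _ => Finset.sum_congr rfl fun j _ => by
        rw [pow_add]; ring
    simp_rw [hft]
    rw [intervalIntegral.integral_finset_sum (fun i _ => by
      apply Continuous.intervalIntegrable; fun_prop)]
    refine Finset.sum_congr rfl fun i _ => ?_
    rw [intervalIntegral.integral_finset_sum (fun j _ => by
      apply Continuous.intervalIntegrable; fun_prop)]
    refine Finset.sum_congr rfl fun j _ => ?_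
    rw [intervalIntegral.integral_const_mul, int_pow01]
    push_cast
    ring
  -- integral of g^2
  have I1 : (∫ t in (0:ℝ)..1, g t ^ 2)
      = ∑ i, ∑ j, (v i * v j) * (((p i : ℝ) * (p j : ℝ)) / ((p i : ℝ) + (p j : ℝ) - 1)) := by
    have hgt : ∀ t : ℝ, g t ^ 2
        = ∑ i, ∑ j, (v i * v j * ((p i : ℝ) * (p j : ℝ))) * t ^ ((p i - 1) + (p j - 1)) := by
      intro t
      rw [hg, sq, Finset.sum_mul_sum]
      exact Finset.sum_congr rfl fun i _ => Finset.sum_congr rfl fun j _ => by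
        rw [pow_add]; ring
    simp_rw [hgt]
    rw [intervalIntegral.integral_finset_sum (fun i _ => by
      apply Continuous.intervalIntegrable; fun_prop)]
    refine Finset.sum_congr rfl fun i _ => ?_
    rw [intervalIntegral.integral_finset_sum (fun j _ => by
      apply Continuous.intervalIntegrable; fun_prop)]
    refine Finset.sum_congr rfl fun j _ => ?_
    rw [intervalIntegral.integral_const_mul, int_pow01]
    rcases Nat.eq_zero_or_pos (p i) with h0 | hip
    · simp [h0]
    rcases Nat.eq_zero_or_pos (p j) with h0 | hjp
    · simp [h0]
    have : ((p i - 1 + (p j - 1) : ℕ) : ℝ) + 1 = (p i : ℝ) + (p j : ℝ) - 1 := by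
      have : ((p i : ℝ)) ≥ 1 := by exact_mod_cast hip
      push_cast [Nat.cast_sub hip, Nat.cast_sub hjp]
      ring
    rw [this]
    ring
  -- the quadratic form
  have expand : star v ⬝ᵥ (‖ξ‖ ^ 2 • (Matrix.of fun i j : Fin (N + 1) =>
          (1 : ℝ) / ((p i : ℝ) + (p j : ℝ) + 1))
        + Matrix.of fun i j : Fin (N + 1) =>
          ((p i : ℝ) * (p j : ℝ)) / ((p i : ℝ) + (p j : ℝ) - 1)) *ᵥ v
      = ‖ξ‖ ^ 2 * (∫ t in (0:ℝ)..1, f t ^ 2) + (∫ t in (0:ℝ)..1, g t ^ 2) := by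
    rw [I0, I1, Finset.mul_sum, ← Finset.sum_add_distrib]
    simp only [star_trivial, dotProduct, Matrix.mulVec, dotProduct,
      Matrix.add_apply, Matrix.smul_apply, Matrix.of_apply, smul_eq_mul, Finset.mul_sum]
    refine Finset.sum_congr rfl fun i _ => ?_
    rw [← Finset.sum_add_distrib]
    refine Finset.sum_congr rfl fun j _ => ?_
    ring
  rw [expand]
  -- positivity of ∫ f^2
  have hP : (∑ i, Polynomial.C (v i) * Polynomial.X ^ p i : ℝ[X]) ≠ 0 := by
    obtain ⟨i₀, hi₀⟩ := Function.ne_iff.mp hv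
    have hi₀' : v i₀ ≠ 0 := by simpa using hi₀
    intro hcontra
    apply hi₀'
    have := congrArg (fun q => Polynomial.coeff q (p i₀)) hcontra
    simp only [Polynomial.finset_sum_coeff, Polynomial.coeff_C_mul, Polynomial.coeff_X_pow,
      Polynomial.coeff_zero, mul_ite, mul_one, mul_zero] at this
    rwa [Finset.sum_eq_single i₀ (fun i _ hi => if_neg (fun h => hi (hp.injective h.symm)))
      (fun h => absurd (Finset.mem_univ i₀) h), if_pos rfl] at this
  have hroot : {x : ℝ | f x = 0}.Finite := by
    have : {x : ℝ | f x = 0} = {x : ℝ | Polynomial.IsRoot (∑ i, Polynomial.C (v i) * Polynomial.X ^ p i) x} := by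
      ext t
      simp [hf, Polynomial.IsRoot, Polynomial.eval_finset_sum]
    rw [this]
    exact Polynomial.finite_setOf_isRoot hP
  have hpos : 0 < ∫ t in (0:ℝ)..1, f t ^ 2 := by
    rw [intervalIntegral.integral_pos_iff_support_of_nonneg_ae'
      (Filter.Eventually.of_forall fun t => sq_nonneg _)
      ((hfc.pow 2).intervalIntegrable _ _)]
    refine ⟨one_pos, ?_⟩
    have hsub : Ioc (0:ℝ) 1 \ {x | f x = 0} ⊆ support (fun t => f t ^ 2) ∩ Ioc 0 1 := by
      rintro t ⟨ht, ht0⟩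
      exact ⟨pow_ne_zero _ (by simpa using ht0), ht⟩
    calc (0:ENNReal) < volume (Ioc (0:ℝ) 1 \ {x | f x = 0}) := by
          rw [measure_diff_null (hroot.measure_zero _)]
          simp [Real.volume_Ioc]
      _ ≤ _ := measure_mono hsub
  have hg0 : 0 ≤ ∫ t in (0:ℝ)..1, g t ^ 2 :=
    intervalIntegral.integral_nonneg (by norm_num) (fun t _ => sq_nonneg _)
  positivity
end

section
/- Let N ≥ 0 be an integer and let p₀, p₁, …, p_N be integers with 0 = p₀ < p₁ < ⋯ < p_N. Define the real symmetric (N+1)×(N+1) matrices A₀ = (1/(p_i+p_j+1))_{0≤i,j≤N} and A₁ = (p_i p_j/(p_i+p_j−1))_{0≤i,j≤N}, with the convention 0/0 = 0, and for ξ ∈ ℝⁿ set 𝒜(ξ) = |ξ|² A₀ + A₁. Then there exists a constant c₀ > 0 such that det 𝒜̃(ξ) ≥ c₀ for all ξ ∈ ℝⁿ. -/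
/-- For a square matrix `A` of size `m`, `tilde A` is the `(m+1) × (m+1)` matrix with block
form `[[0, 𝟙ᵀ], [−𝟙, A]]`, where `𝟙 = (1,…,1)ᵀ`. -/
noncomputable def tilde {m : ℕ} (A : Matrix (Fin m) (Fin m) ℝ) :
    Matrix (Fin 1 ⊕ Fin m) (Fin 1 ⊕ Fin m) ℝ :=
  Matrix.fromBlocks 0 (Matrix.of fun _ _ => (1 : ℝ)) (Matrix.of fun _ _ => (-1 : ℝ)) A

open Matrix Polynomial MeasureTheory intervalIntegral Finset Set Filter Function

open Matrix in
lemma det_tilde {m : ℕ} (H : Matrix (Fin m) (Fin m) ℝ) :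
    (tilde H).det = (H + Matrix.of fun _ _ => (1:ℝ)).det - H.det := by
  classical
  set Ma : Matrix (Fin 1 ⊕ Fin m) (Fin 1 ⊕ Fin m) ℝ :=
    fromBlocks 1 (of fun _ _ => 1) (of fun _ _ => -1) H with hMa
  set Mb : Matrix (Fin 1 ⊕ Fin m) (Fin 1 ⊕ Fin m) ℝ :=
    fromBlocks 1 0 (of fun _ _ => -1) H with hMb
  have hdetMa : Ma.det = (H + Matrix.of fun _ _ => (1:ℝ)).det := by
    rw [hMa, det_fromBlocks_one₁₁]
    congr 1
    ext i j
    simp [Matrix.mul_apply, sub_eq_add_neg]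
  have hdetMb : Mb.det = H.det := by
    rw [hMb, det_fromBlocks_one₁₁, Matrix.mul_zero, sub_zero]
  have hrow : tilde H =
      Ma.updateRow (Sum.inl 0) (Ma (Sum.inl 0) + (-1 : ℝ) • Mb (Sum.inl 0)) := by
    ext a b
    rcases eq_or_ne a (Sum.inl 0) with rfl | ha
    · rw [Matrix.updateRow_self]
      cases b <;> simp [tilde, hMa, hMb, fromBlocks, Matrix.one_apply]
    · rw [Matrix.updateRow_ne ha]
      rcases a with a | a
      · exact absurd (by simp [Subsingleton.elim a 0]) ha
      · cases b <;> simp [tilde, hMa, fromBlocks]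
  have hupd : Ma.updateRow (Sum.inl 0) (Mb (Sum.inl 0)) = Mb := by
    ext a b
    rcases eq_or_ne a (Sum.inl 0) with rfl | ha
    · rw [Matrix.updateRow_self]
    · rw [Matrix.updateRow_ne ha]
      rcases a with a | a
      · exact absurd (by simp [Subsingleton.elim a 0]) ha
      · cases b <;> simp [hMa, hMb, fromBlocks]
  rw [hrow, Matrix.det_updateRow_add, Matrix.det_updateRow_smul, Matrix.updateRow_eq_self,
    hupd, hdetMa, hdetMb]
  ring

lemma exists_lb (P : ℝ[X]) (h : ∀ t : ℝ, 0 ≤ t → 0 < P.eval t) :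
    ∃ c > (0:ℝ), ∀ t : ℝ, 0 ≤ t → c ≤ P.eval t := by
  by_cases hd : 0 < P.degree
  · obtain ⟨T, hT⟩ := (Polynomial.abs_tendsto_atTop P hd).eventually_ge_atTop 1 |>.exists_forall_of_atTop
    set T' : ℝ := max T 0 with hT'
    have hcomp : IsCompact (Icc (0:ℝ) T') := isCompact_Icc
    obtain ⟨x₀, hx₀, hmin⟩ := hcomp.exists_isMinOn (nonempty_Icc.2 (le_max_right T 0))
      (P.continuous_aeval.continuousOn (s := Icc 0 T'))
    refine ⟨min (P.eval x₀) 1, lt_min (h x₀ hx₀.1) one_pos, fun t ht => ?_⟩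
    rcases le_or_gt t T' with h1 | h1
    · exact le_trans (min_le_left _ _) (by simpa using hmin ⟨ht, h1⟩)
    · have h2 : (1:ℝ) ≤ |P.eval t| := hT t (le_trans (le_max_left T 0) h1.le)
      rw [abs_of_pos (h t ht)] at h2
      exact le_trans (min_le_right _ _) h2
  · obtain ⟨a, rfl⟩ : ∃ a, P = C a := ⟨P.coeff 0, Polynomial.eq_C_of_degree_le_zero (not_lt.1 hd)⟩
    exact ⟨a, by simpa using h 0 le_rfl, fun t _ => by simp⟩

lemma integral_sq_poly_pos (q : ℝ[X]) (hq : q ≠ 0) :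
    0 < ∫ x in (0:ℝ)..1, (q.eval x)^2 := by
  have hcont : Continuous fun x : ℝ => (q.eval x)^2 := (q.continuous_aeval).pow 2
  rw [integral_pos_iff_support_of_nonneg_ae
    (Eventually.of_forall fun x => sq_nonneg _) (hcont.intervalIntegrable _ _)]
  refine ⟨one_pos, ?_⟩
  have hsub : Ioc (0:ℝ) 1 \ {x | q.IsRoot x} ⊆
      Function.support (fun x => (q.eval x)^2) ∩ Ioc 0 1 := by
    rintro x ⟨hx1, hx2⟩
    exact ⟨pow_ne_zero _ hx2, hx1⟩
  refine lt_of_lt_of_le ?_ (measure_mono hsub)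
  rw [measure_diff_null ((Polynomial.finite_setOf_isRoot hq).measure_zero _)]
  simp

variable {N : ℕ}

noncomputable def A₀ (p : Fin (N+1) → ℕ) : Matrix (Fin (N+1)) (Fin (N+1)) ℝ :=
  Matrix.of fun i j => (1 : ℝ) / ((p i : ℝ) + (p j : ℝ) + 1)

noncomputable def A₁ (p : Fin (N+1) → ℕ) : Matrix (Fin (N+1)) (Fin (N+1)) ℝ :=
  Matrix.of fun i j => ((p i : ℝ) * (p j : ℝ)) / ((p i : ℝ) + (p j : ℝ) - 1)

lemma entryA0 (p : Fin (N+1) → ℕ) (i j : Fin (N+1)) :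
    ∫ x in (0:ℝ)..1, (x ^ p i) * (x ^ p j) = A₀ p i j := by
  have : ∀ x : ℝ, x ^ p i * x ^ p j = x ^ (p i + p j) := fun x => (pow_add x _ _).symm
  simp only [this, integral_pow, A₀, Matrix.of_apply]
  push_cast
  simp

lemma entryA1 (p : Fin (N+1) → ℕ) (i j : Fin (N+1)) :
    ∫ x in (0:ℝ)..1, ((p i : ℝ) * x ^ (p i - 1)) * ((p j : ℝ) * x ^ (p j - 1)) = A₁ p i j := by
  rcases Nat.eq_zero_or_pos (p i) with hi | hi
  · simp [hi, A₁]
  rcases Nat.eq_zero_or_pos (p j) with hj | hj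
  · simp [hj, A₁]
  have key : ∀ x : ℝ, ((p i : ℝ) * x ^ (p i - 1)) * ((p j : ℝ) * x ^ (p j - 1))
      = ((p i : ℝ) * (p j : ℝ)) * x ^ (p i + p j - 2) := by
    intro x
    rw [show p i + p j - 2 = (p i - 1) + (p j - 1) by omega, pow_add]
    ring
  simp only [key, intervalIntegral.integral_const_mul, integral_pow]
  have h2 : (p i + p j - 2) + 1 = p i + p j - 1 := by omega
  have hc : ((p i + p j - 2 : ℕ) : ℝ) + 1 = ((p i : ℝ) + (p j : ℝ)) - 1 := by
    have := h2
    push_cast [show ((p i + p j - 2 : ℕ) : ℝ) = (p i : ℝ) + p j - 2 by push_cast [Nat.cast_sub (by omega : 2 ≤ p i + p j)]; ring]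
    ring
  rw [hc]
  simp [A₁, div_eq_mul_inv]

set_option maxHeartbeats 1000000 in
lemma dot_eq_integral (v : Fin (N+1) → ℝ) (g : Fin (N+1) → ℝ → ℝ)
    (M : Matrix (Fin (N+1)) (Fin (N+1)) ℝ)
    (hg : ∀ i, Continuous (g i))
    (hM : ∀ i j, M i j = ∫ x in (0:ℝ)..1, g i x * g j x) :
    v ⬝ᵥ (M *ᵥ v) = ∫ x in (0:ℝ)..1, (∑ i, v i * g i x) ^ 2 := by
  have hci : ∀ i j : Fin (N+1),
      IntervalIntegrable (fun x => (v i * g i x) * (v j * g j x)) volume 0 1 :=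
    fun i j => ((continuous_const.mul (hg i)).mul (continuous_const.mul (hg j))).intervalIntegrable _ _
  have hsq : ∀ x : ℝ, (∑ i, v i * g i x) ^ 2
      = ∑ i, ∑ j, (v i * g i x) * (v j * g j x) := by
    intro x
    rw [sq, Finset.sum_mul_sum]
  rw [intervalIntegral.integral_congr (fun x _ => hsq x)]
  have houter := intervalIntegral.integral_finset_sum (μ := volume) (a := (0:ℝ)) (b := 1)
    (s := Finset.univ)
    (f := fun (i : Fin (N+1)) (x : ℝ) => ∑ j, (v i * g i x) * (v j * g j x))
    (fun i _ => (Continuous.intervalIntegrable (continuous_finset_sum _ fun j _ =>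
      (continuous_const.mul (hg i)).mul (continuous_const.mul (hg j))) _ _))
  rw [houter]
  have hinner : ∀ i : Fin (N+1), (∫ x in (0:ℝ)..1, ∑ j, (v i * g i x) * (v j * g j x))
      = ∑ j, v i * v j * M i j := by
    intro i
    rw [intervalIntegral.integral_finset_sum (μ := volume) (a := (0:ℝ)) (b := 1)
      (s := Finset.univ)
      (f := fun (j : Fin (N+1)) (x : ℝ) => (v i * g i x) * (v j * g j x))
      (fun j _ => hci i j)]
    refine Finset.sum_congr rfl fun j _ => ?_
    have he : (fun x => (v i * g i x) * (v j * g j x))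
        = fun x => (v i * v j) * (g i x * g j x) := by funext x; ring
    rw [he, intervalIntegral.integral_const_mul, hM]
  simp only [hinner]
  simp only [dotProduct, mulVec, Finset.mul_sum]
  exact Finset.sum_congr rfl fun i _ => Finset.sum_congr rfl fun j _ => by ring

-- quadratic forms as integrals
lemma qfA0 (p : Fin (N+1) → ℕ) (v : Fin (N+1) → ℝ) :
    v ⬝ᵥ (A₀ p *ᵥ v) = ∫ x in (0:ℝ)..1, (∑ i, v i * x ^ p i) ^ 2 :=
  dot_eq_integral v (fun i x => x ^ p i) _ (fun i => continuous_pow _)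
    (fun i j => (entryA0 p i j).symm)

lemma qfA1 (p : Fin (N+1) → ℕ) (v : Fin (N+1) → ℝ) :
    v ⬝ᵥ (A₁ p *ᵥ v) = ∫ x in (0:ℝ)..1, (∑ i, v i * ((p i : ℝ) * x ^ (p i - 1))) ^ 2 :=
  dot_eq_integral v (fun i x => (p i : ℝ) * x ^ (p i - 1)) _
    (fun i => continuous_const.mul (continuous_pow _))
    (fun i j => (entryA1 p i j).symm)

lemma eval_q (v : Fin (N+1) → ℝ) (e : Fin (N+1) → ℕ) (x : ℝ) :
    Polynomial.eval x (∑ i, Polynomial.C (v i) * Polynomial.X ^ e i) = ∑ i, v i * x ^ e i := by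
  simp [Polynomial.eval_finset_sum]

lemma q_ne_zero (v : Fin (N+1) → ℝ) (e : Fin (N+1) → ℕ) (i₀ : Fin (N+1)) (hv : v i₀ ≠ 0)
    (he : ∀ j, j ≠ i₀ → e j = e i₀ → v j = 0) :
    (∑ i, Polynomial.C (v i) * Polynomial.X ^ e i) ≠ 0 := by
  intro h
  have hc : (∑ i, Polynomial.C (v i) * Polynomial.X ^ e i).coeff (e i₀) = v i₀ := by
    rw [Polynomial.finset_sum_coeff]
    rw [Finset.sum_eq_single i₀]
    · simp [Polynomial.coeff_C_mul, Polynomial.coeff_X_pow]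
    · intro j _ hj
      simp only [Polynomial.coeff_C_mul, Polynomial.coeff_X_pow]
      rcases eq_or_ne (e j) (e i₀) with hee | hee
      · simp [he j hj hee]
      · simp [Ne.symm hee]
    · simp
  rw [h] at hc
  simp at hc
  exact hv hc.symm

-- positivity of quadratic forms
lemma qfA0_pos (p : Fin (N+1) → ℕ) (hp : StrictMono p) (v : Fin (N+1) → ℝ) (hv : v ≠ 0) :
    0 < v ⬝ᵥ (A₀ p *ᵥ v) := by
  rw [qfA0]
  obtain ⟨i₀, hi₀⟩ := Function.ne_iff.1 hv
  have hq := q_ne_zero v p i₀ hi₀ (fun j hj hee => absurd (hp.injective hee) hj)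
  have := integral_sq_poly_pos _ hq
  refine lt_of_lt_of_eq this (intervalIntegral.integral_congr fun x _ => by rw [eval_q])

lemma qfA1_nonneg (p : Fin (N+1) → ℕ) (v : Fin (N+1) → ℝ) :
    0 ≤ v ⬝ᵥ (A₁ p *ᵥ v) := by
  rw [qfA1]
  apply intervalIntegral.integral_nonneg (by norm_num)
  intro x _
  positivity

lemma qfJ (v : Fin (N+1) → ℝ) :
    v ⬝ᵥ ((Matrix.of fun _ _ => (1:ℝ)) *ᵥ v) = (∑ i, v i) ^ 2 := by
  simp [dotProduct, mulVec, sq, Finset.sum_mul]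

lemma qfA1J_pos (p : Fin (N+1) → ℕ) (hp0 : p 0 = 0) (hp : StrictMono p)
    (v : Fin (N+1) → ℝ) (hv : v ≠ 0) :
    0 < v ⬝ᵥ ((A₁ p + Matrix.of fun _ _ => (1:ℝ)) *ᵥ v) := by
  rw [Matrix.add_mulVec, dotProduct_add, qfJ]
  rcases eq_or_ne (∑ i, v i) 0 with hs | hs
  · -- need the A₁ part positive
    have hex : ∃ i₀ : Fin (N+1), i₀ ≠ 0 ∧ v i₀ ≠ 0 := by
      by_contra hco
      push_neg at hco
      have hvz : ∀ i : Fin (N+1), i ≠ 0 → v i = 0 := hco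
      have : ∑ i, v i = v 0 := by
        rw [Finset.sum_eq_single 0]
        · intro j _ hj; exact hvz j hj
        · simp
      apply hv
      funext i
      simp only [Pi.zero_apply]
      rcases eq_or_ne i 0 with rfl | hi
      · rw [← this]; exact hs
      · exact hvz i hi
    obtain ⟨i₀, hne, hvi⟩ := hex
    have hpi₀ : 0 < p i₀ := by
      rw [← hp0]
      exact hp (Fin.pos_of_ne_zero hne)
    have hA1 : 0 < v ⬝ᵥ (A₁ p *ᵥ v) := by
      rw [qfA1]
      have hq := q_ne_zero (fun i => v i * (p i : ℝ)) (fun i => p i - 1) i₀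
        (by positivity)
        (fun j hj hee => by
          have hee' : p j - 1 = p i₀ - 1 := hee
          rcases Nat.eq_zero_or_pos (p j) with hz | hz
          · simp [hz]
          · exfalso; exact hj (hp.injective (by omega)))
      have := integral_sq_poly_pos _ hq
      refine lt_of_lt_of_eq this (intervalIntegral.integral_congr fun x _ => ?_)
      rw [eval_q]
      congr 1
      refine Finset.sum_congr rfl fun i _ => by ring
    have : (0:ℝ) ≤ (∑ i, v i)^2 := sq_nonneg _
    linarith
  · have := qfA1_nonneg p v
    have h2 : 0 < (∑ i, v i)^2 := sq_pos_of_ne_zero hs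
    linarith

lemma herm_smul_add (p : Fin (N+1) → ℕ) (t : ℝ) : (t • A₀ p + A₁ p).IsHermitian := by
  unfold Matrix.IsHermitian
  ext i j
  simp only [conjTranspose_apply, Matrix.add_apply, Matrix.smul_apply, A₀, A₁, Matrix.of_apply,
    star_trivial, smul_eq_mul]
  ring_nf

lemma herm_A1J (p : Fin (N+1) → ℕ) : (A₁ p + Matrix.of fun _ _ => (1:ℝ)).IsHermitian := by
  unfold Matrix.IsHermitian
  ext i j
  simp only [conjTranspose_apply, Matrix.add_apply, A₁, Matrix.of_apply, star_trivial]
  ring_nf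

lemma posdef_H (p : Fin (N+1) → ℕ) (hp : StrictMono p) (t : ℝ) (ht : 0 < t) :
    (t • A₀ p + A₁ p).PosDef := by
  refine Matrix.PosDef.of_dotProduct_mulVec_pos (herm_smul_add p t) fun x hx => ?_
  rw [star_trivial, Matrix.add_mulVec, dotProduct_add, Matrix.smul_mulVec,
    dotProduct_smul]
  have h0 := qfA0_pos p hp x hx
  have h1 := qfA1_nonneg p x
  have : 0 < t * (x ⬝ᵥ A₀ p *ᵥ x) := mul_pos ht h0
  simpa [smul_eq_mul] using add_pos_of_pos_of_nonneg this h1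

lemma posdef_A1J (p : Fin (N+1) → ℕ) (hp0 : p 0 = 0) (hp : StrictMono p) :
    (A₁ p + Matrix.of fun _ _ => (1:ℝ)).PosDef := by
  refine Matrix.PosDef.of_dotProduct_mulVec_pos (herm_A1J p) fun x hx => ?_
  rw [star_trivial]
  exact qfA1J_pos p hp0 hp x hx

lemma det_tilde_pos_of_posdef (H : Matrix (Fin (N+1)) (Fin (N+1)) ℝ) (hH : H.PosDef) :
    0 < (tilde H).det := by
  haveI : Invertible H := H.invertibleOfIsUnitDet hH.det_pos.ne'.isUnit
  rw [tilde, Matrix.det_fromBlocks₂₂]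
  have hinv : ⅟H = H⁻¹ := invOf_eq_nonsing_inv H
  have hdet1 : ((0 : Matrix (Fin 1) (Fin 1) ℝ)
      - (Matrix.of fun (_ : Fin 1) (_ : Fin (N+1)) => (1:ℝ)) * ⅟H
        * (Matrix.of fun (_ : Fin (N+1)) (_ : Fin 1) => (-1:ℝ))).det
      = ∑ j, ∑ k, H⁻¹ k j := by
    rw [Matrix.det_fin_one]
    simp only [Matrix.sub_apply, Matrix.zero_apply, Matrix.mul_apply, Matrix.of_apply, hinv]
    simp [Finset.sum_mul, mul_comm]
  rw [hdet1]
  refine mul_pos hH.det_pos ?_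
  have hinvpd := hH.inv
  have hone : (fun _ => (1:ℝ)) ≠ (0 : Fin (N+1) → ℝ) := by
    intro h
    have := congrFun h 0
    simp at this
  have := hinvpd.dotProduct_mulVec_pos hone
  rw [star_trivial] at this
  convert this using 1
  simp only [dotProduct, mulVec]
  rw [Finset.sum_comm]
  simp [Finset.mul_sum]

noncomputable def Pm (p : Fin (N+1) → ℕ) : ℝ[X] :=
  (Matrix.fromBlocks (0 : Matrix (Fin 1) (Fin 1) ℝ[X])
    (Matrix.of fun (_ : Fin 1) (_ : Fin (N+1)) => (1:ℝ[X]))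
    (Matrix.of fun (_ : Fin (N+1)) (_ : Fin 1) => (-1:ℝ[X]))
    ((Polynomial.X : ℝ[X]) • (A₀ p).map Polynomial.C + (A₁ p).map Polynomial.C)).det

lemma eval_Pm (p : Fin (N+1) → ℕ) (t : ℝ) :
    (Pm p).eval t = (tilde (t • A₀ p + A₁ p)).det := by
  have h := RingHom.map_det (Polynomial.evalRingHom t)
    (Matrix.fromBlocks (0 : Matrix (Fin 1) (Fin 1) ℝ[X])
      (Matrix.of fun (_ : Fin 1) (_ : Fin (N+1)) => (1:ℝ[X]))
      (Matrix.of fun (_ : Fin (N+1)) (_ : Fin 1) => (-1:ℝ[X]))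
      ((Polynomial.X : ℝ[X]) • (A₀ p).map Polynomial.C + (A₁ p).map Polynomial.C))
  rw [Pm]
  show (Polynomial.evalRingHom t) _ = _
  rw [h, RingHom.mapMatrix_apply]
  congr 1
  rw [Matrix.fromBlocks_map]
  unfold tilde
  ext i j
  rcases i with i | i <;> rcases j with j | j
  · simp [Matrix.fromBlocks]
  · simp [Matrix.fromBlocks]
  · simp [Matrix.fromBlocks]
  · simp only [Matrix.fromBlocks, Matrix.of_apply, Sum.elim_inr, Matrix.map_apply,
      Matrix.add_apply, Matrix.smul_apply, smul_eq_mul, Polynomial.coe_evalRingHom,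
      Polynomial.eval_add, Polynomial.eval_mul, Polynomial.eval_X, Polynomial.eval_C]

/-- For `0 = p₀ < p₁ < ⋯ < p_N` and `𝒜(ξ) = |ξ|² A₀ + A₁`, there is a constant `c₀ > 0` such
that `det 𝒜̃(ξ) ≥ c₀` for all `ξ`. -/
theorem stmt_2 (n N : ℕ) (hn : 1 ≤ n) (p : Fin (N + 1) → ℕ)
    (hp0 : p 0 = 0) (hp : StrictMono p) :
    ∃ c₀ > (0 : ℝ), ∀ ξ : EuclideanSpace ℝ (Fin n),
      c₀ ≤ (tilde
        (‖ξ‖ ^ 2 • (Matrix.of fun i j : Fin (N + 1) =>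
            (1 : ℝ) / ((p i : ℝ) + (p j : ℝ) + 1))
          + Matrix.of fun i j : Fin (N + 1) =>
            ((p i : ℝ) * (p j : ℝ)) / ((p i : ℝ) + (p j : ℝ) - 1))).det := by
  have hpos : ∀ t : ℝ, 0 ≤ t → 0 < (Pm p).eval t := by
    intro t ht
    rw [eval_Pm]
    rcases eq_or_lt_of_le ht with rfl | ht'
    · -- t = 0
      have hz : (0:ℝ) • A₀ p + A₁ p = A₁ p := by
        ext i j; simp
      rw [hz, det_tilde]
      have hrow : A₁ p 0 = 0 := by
        funext j
        simp [A₁, hp0]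
      have hdetA1 : (A₁ p).det = 0 := by
        apply Matrix.det_eq_zero_of_row_eq_zero 0
        intro j
        exact congrFun hrow j
      rw [hdetA1, sub_zero]
      exact (posdef_A1J p hp0 hp).det_pos
    · exact det_tilde_pos_of_posdef _ (posdef_H p hp t ht')
  obtain ⟨c₀, hc₀, hlb⟩ := exists_lb (Pm p) hpos
  refine ⟨c₀, hc₀, fun ξ => ?_⟩
  have ht : (0:ℝ) ≤ ‖ξ‖ ^ 2 := by positivity
  have := hlb _ ht
  rw [eval_Pm] at this
  exact this
end

section
/- Let N ≥ 0 be an integer and let p₀, p₁, …, p_N be integers with 0 = p₀ < p₁ < ⋯ < p_N. Define the real symmetric (N+1)×(N+1) matrices A₀ = (1/(p_i+p_j+1))_{0≤i,j≤N} and A₁ = (p_i p_j/(p_i+p_j−1))_{0≤i,j≤N}, with the convention 0/0 = 0, and for ξ ∈ ℝⁿ set 𝒜(ξ) = |ξ|² A₀ + A₁. Then there exists a real polynomial P of degree exactly N whose coefficient of X^N equals det A₀, such that det 𝒜(ξ) = |ξ|² · P(|ξ|²) for all ξ ∈ ℝⁿ. -/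
open Polynomial Matrix MeasureTheory intervalIntegral Set Function

lemma aux_det_pos (N : ℕ) (p : Fin (N + 1) → ℕ) (hp : StrictMono p) :
    0 < (Matrix.of fun i j : Fin (N + 1) =>
        (1 : ℝ) / ((p i : ℝ) + (p j : ℝ) + 1)).det := by
  apply Matrix.PosDef.det_pos
  rw [Matrix.posDef_iff_dotProduct_mulVec]
  constructor
  · ext i j
    simp [Matrix.conjTranspose_apply, add_comm ((p i : ℝ))]
  · intro x hx
    have key : dotProduct (star x) ((Matrix.of fun i j : Fin (N + 1) =>
        (1 : ℝ) / ((p i : ℝ) + (p j : ℝ) + 1)) *ᵥ x)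
        = ∫ t in (0:ℝ)..1, (∑ i, x i * t ^ p i) ^ 2 := by
      have hint : ∀ t : ℝ, (∑ i, x i * t ^ p i) ^ 2
          = ∑ i, ∑ j, (x i * x j) * t ^ (p i + p j) := by
        intro t
        rw [sq, Finset.sum_mul_sum]
        refine Finset.sum_congr rfl fun i _ => Finset.sum_congr rfl fun j _ => ?_
        rw [pow_add]; ring
      simp only [hint]
      rw [intervalIntegral.integral_finset_sum]
      · have : ∀ i : Fin (N+1), (∫ t in (0:ℝ)..1, ∑ j, (x i * x j) * t ^ (p i + p j))
            = ∑ j, (x i * x j) * (1 / ((p i : ℝ) + (p j : ℝ) + 1)) := by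
          intro i
          rw [intervalIntegral.integral_finset_sum]
          · refine Finset.sum_congr rfl fun j _ => ?_
            rw [intervalIntegral.integral_const_mul, integral_pow]
            push_cast
            simp
          · intro j _
            exact (Continuous.intervalIntegrable (by fun_prop) _ _)
        simp only [this]
        simp only [dotProduct, mulVec, star_trivial, Matrix.of_apply, Finset.mul_sum]
        refine Finset.sum_congr rfl fun i _ => Finset.sum_congr rfl fun j _ => ?_
        ring
      · intro i _
        exact (Continuous.intervalIntegrable (by fun_prop) _ _)
    rw [key]
    set q : Polynomial ℝ := ∑ i, C (x i) * X ^ (p i) with hq_def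
    have hq_eval : ∀ t : ℝ, q.eval t = ∑ i, x i * t ^ p i := by
      intro t; simp [hq_def, eval_finset_sum]
    obtain ⟨i₀, hi₀⟩ := Function.ne_iff.mp hx
    have hq : q ≠ 0 := by
      intro h
      have hc : q.coeff (p i₀) = x i₀ := by
        simp only [hq_def, finset_sum_coeff, coeff_C_mul, coeff_X_pow]
        rw [Finset.sum_eq_single i₀]
        · simp
        · intro j _ hj
          rw [if_neg fun h' => hj (hp.injective h'.symm), mul_zero]
        · simp
      rw [h] at hc
      exact hi₀ (by simpa using hc.symm)
    have hroots : volume {t : ℝ | q.IsRoot t} = 0 :=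
      (Polynomial.finite_setOf_isRoot hq).measure_zero _
    rw [intervalIntegral.integral_pos_iff_support_of_nonneg_ae]
    · refine ⟨one_pos, ?_⟩
      have hsub : Ioc (0:ℝ) 1 \ {t : ℝ | q.IsRoot t}
          ⊆ support (fun t : ℝ => (∑ i, x i * t ^ p i) ^ 2) ∩ Ioc 0 1 := by
        intro t ht
        refine ⟨?_, ht.1⟩
        have : q.eval t ≠ 0 := ht.2
        rw [hq_eval] at this
        simp [Function.mem_support, pow_ne_zero_iff]
        exact this
      calc (0 : ENNReal) < volume (Ioc (0:ℝ) 1 \ {t : ℝ | q.IsRoot t}) := by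
              rw [measure_diff_null hroots]
              simp [Real.volume_Ioc]
        _ ≤ _ := measure_mono hsub
    · exact Filter.Eventually.of_forall fun t => sq_nonneg _
    · exact (Continuous.intervalIntegrable (by fun_prop) _ _)

/-- For `0 = p₀ < p₁ < ⋯ < p_N` and `𝒜(ξ) = |ξ|² A₀ + A₁`, there is a real polynomial `P` of
degree exactly `N` with leading coefficient `det A₀` such that
`det 𝒜(ξ) = |ξ|² P(|ξ|²)` for all `ξ ∈ ℝⁿ`. -/
theorem stmt_3 (n N : ℕ) (hn : 1 ≤ n) (p : Fin (N + 1) → ℕ)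
    (hp0 : p 0 = 0) (hp : StrictMono p) :
    ∃ P : Polynomial ℝ, P.degree = (N : WithBot ℕ) ∧
      P.coeff N = (Matrix.of fun i j : Fin (N + 1) =>
        (1 : ℝ) / ((p i : ℝ) + (p j : ℝ) + 1)).det ∧
      ∀ ξ : EuclideanSpace ℝ (Fin n),
        (‖ξ‖ ^ 2 • (Matrix.of fun i j : Fin (N + 1) =>
            (1 : ℝ) / ((p i : ℝ) + (p j : ℝ) + 1))
          + Matrix.of fun i j : Fin (N + 1) =>
            ((p i : ℝ) * (p j : ℝ)) / ((p i : ℝ) + (p j : ℝ) - 1)).det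
        = ‖ξ‖ ^ 2 * P.eval (‖ξ‖ ^ 2) := by
  classical
  set A0 : Matrix (Fin (N + 1)) (Fin (N + 1)) ℝ := Matrix.of fun i j : Fin (N + 1) =>
    (1 : ℝ) / ((p i : ℝ) + (p j : ℝ) + 1) with hA0
  set A1 : Matrix (Fin (N + 1)) (Fin (N + 1)) ℝ := Matrix.of fun i j : Fin (N + 1) =>
    ((p i : ℝ) * (p j : ℝ)) / ((p i : ℝ) + (p j : ℝ) - 1) with hA1
  have hdet : A0.det ≠ 0 := (aux_det_pos N p hp).ne'
  set B : Matrix (Fin (N + 1)) (Fin (N + 1)) ℝ := A0⁻¹ * A1 with hB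
  set M : Matrix (Fin (N + 1)) (Fin (N + 1)) ℝ[X] :=
    (X : ℝ[X]) • A0.map C + A1.map C with hM
  -- factorization
  have hfac : M = A0.map C * Matrix.charmatrix (-B) := by
    have h1 : Matrix.charmatrix (-B)
        = (X : ℝ[X]) • (1 : Matrix (Fin (N + 1)) (Fin (N + 1)) ℝ[X]) + B.map C := by
      ext i j
      by_cases h : i = j <;>
        simp [Matrix.charmatrix_apply, Matrix.diagonal_apply, h, Matrix.one_apply,
          sub_neg_eq_add]
    have h2 : A0 * B = A1 := by
      rw [hB, ← Matrix.mul_assoc, Matrix.mul_nonsing_inv A0 (isUnit_iff_ne_zero.mpr hdet),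
        Matrix.one_mul]
    rw [h1, mul_add, Matrix.mul_smul, mul_one, ← Matrix.map_mul, h2, hM]
  have hQ : M.det = C A0.det * Matrix.charpoly (-B) := by
    have hdetmap : (A0.map (C : ℝ →+* Polynomial ℝ)).det = C A0.det := by
      rw [← RingHom.mapMatrix_apply, ← RingHom.map_det]
    rw [hfac, Matrix.det_mul, hdetmap]
    rfl
  -- factor X out of row 0
  set P : ℝ[X] := (M.updateRow 0 fun j => C (A0 0 j)).det with hP
  have hrow : M 0 = (X : ℝ[X]) • fun j => C (A0 0 j) := by
    funext j
    have h0 : A1 0 j = 0 := by simp [hA1, hp0]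
    simp [hM, h0]
  have hXP : M.det = X * P := by
    conv_lhs => rw [← Matrix.updateRow_eq_self M 0, hrow]
    rw [Matrix.det_updateRow_smul, hP]
  -- degree computations
  have hchdeg : (Matrix.charpoly (-B)).degree = ((N + 1 : ℕ) : WithBot ℕ) := by
    rw [Matrix.charpoly_degree_eq_dim]; simp
  have hdegQ : M.det.degree = ((N + 1 : ℕ) : WithBot ℕ) := by
    rw [hQ, Polynomial.degree_mul, Polynomial.degree_C hdet, hchdeg, zero_add]
  have hPne : P ≠ 0 := by
    intro h
    rw [hXP, h, mul_zero, Polynomial.degree_zero] at hdegQ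
    exact absurd hdegQ ((by exact_mod_cast WithBot.bot_ne_coe (a := N + 1)))
  have hdegP : P.degree = (N : WithBot ℕ) := by
    have h1 : M.det.degree = 1 + P.degree := by
      rw [hXP, Polynomial.degree_mul, Polynomial.degree_X]
    rw [hdegQ, Polynomial.degree_eq_natDegree hPne] at h1
    have h2 : N + 1 = 1 + P.natDegree := by exact_mod_cast h1
    rw [Polynomial.degree_eq_natDegree hPne]
    norm_cast
    omega
  have hcoeff : P.coeff N = A0.det := by
    have h := congrArg (fun q : ℝ[X] => q.coeff (N + 1)) hXP.symm
    simp only [Polynomial.coeff_X_mul] at h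
    rw [h, hQ, Polynomial.coeff_C_mul]
    have hnd : (Matrix.charpoly (-B)).natDegree = N + 1 := by
      rw [Matrix.charpoly_natDegree_eq_dim]; simp
    have : (Matrix.charpoly (-B)).coeff (N + 1) = 1 := by
      have hmc := (Matrix.charpoly_monic (-B)).coeff_natDegree
      rwa [hnd] at hmc
    rw [this, mul_one]
  refine ⟨P, hdegP, hcoeff, fun ξ => ?_⟩
  have h1 : (Polynomial.evalRingHom (‖ξ‖ ^ 2 : ℝ)) M.det
      = (M.map (Polynomial.evalRingHom (‖ξ‖ ^ 2 : ℝ))).det :=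
    RingHom.map_det _ M
  have h2 : M.map (Polynomial.evalRingHom (‖ξ‖ ^ 2 : ℝ)) = ‖ξ‖ ^ 2 • A0 + A1 := by
    ext i j
    rw [hM]
    simp only [Matrix.map_apply, Matrix.add_apply, Matrix.smul_apply, smul_eq_mul,
      Polynomial.coe_evalRingHom, Polynomial.eval_add, Polynomial.eval_mul,
      Polynomial.eval_X, Polynomial.eval_C]
  rw [← h2, ← h1, hXP]
  simp
end

section
/- Let N ≥ 0 be an integer and let p₀, p₁, …, p_N be integers with 0 = p₀ < p₁ < ⋯ < p_N. Define the real symmetric (N+1)×(N+1) matrices A₀ = (1/(p_i+p_j+1))_{0≤i,j≤N} and A₁ = (p_i p_j/(p_i+p_j−1))_{0≤i,j≤N}, with the convention 0/0 = 0, and for ξ ∈ ℝⁿ set 𝒜(ξ) = |ξ|² A₀ + A₁. Then there exists a real polynomial Q of degree exactly N whose coefficient of X^N equals det Ã₀, such that det 𝒜̃(ξ) = Q(|ξ|²) for all ξ ∈ ℝⁿ. -/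
open Polynomial Matrix

private lemma coeff_prod_deg {ι : Type*} [DecidableEq ι] (s : Finset ι)
    (f : ι → Polynomial ℝ) (d : ι → ℕ) (h : ∀ i ∈ s, (f i).natDegree ≤ d i) :
    (∏ i ∈ s, f i).coeff (∑ i ∈ s, d i) = ∏ i ∈ s, (f i).coeff (d i) := by
  induction s using Finset.induction_on with
  | empty => simp
  | @insert a s ha ih =>
    rw [Finset.prod_insert ha, Finset.sum_insert ha, Finset.prod_insert ha,
      Polynomial.coeff_mul_add_eq_of_natDegree_le (h a (Finset.mem_insert_self a s))
        ((Polynomial.natDegree_prod_le _ _).trans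
          (Finset.sum_le_sum fun i hi => h i (Finset.mem_insert_of_mem hi))),
      ih (fun i hi => h i (Finset.mem_insert_of_mem hi))]

private noncomputable def Tmat {k : ℕ} (A0 A1 : Matrix (Fin (k+1)) (Fin (k+1)) ℝ) :
    Matrix (Fin 1 ⊕ Fin (k+1)) (Fin 1 ⊕ Fin (k+1)) (Polynomial ℝ) :=
  Matrix.fromBlocks 0 (Matrix.of fun _ _ => (1 : ℝ[X])) (Matrix.of fun _ _ => (-1 : ℝ[X]))
    (Matrix.of fun i j => Polynomial.C (A0 i j) * Polynomial.X + Polynomial.C (A1 i j))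

private lemma Tmat_key {k : ℕ} (A0 A1 : Matrix (Fin (k+1)) (Fin (k+1)) ℝ)
    (σ : Equiv.Perm (Fin 1 ⊕ Fin (k+1))) (hσ : σ (Sum.inl 0) ≠ Sum.inl 0) :
    (∏ i, Tmat A0 A1 (σ i) i).natDegree ≤ k ∧
      (∏ i, Tmat A0 A1 (σ i) i).coeff k = ∏ i, (tilde A0) (σ i) i := by
  classical
  set d : (Fin 1 ⊕ Fin (k+1)) → ℕ :=
    fun i => if i = Sum.inl 0 ∨ σ i = Sum.inl 0 then 0 else 1 with hd_def
  have hd : ∀ i, (Tmat A0 A1 (σ i) i).natDegree ≤ d i := by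
    intro i
    rcases i with i | i
    · have hi : i = 0 := Subsingleton.elim i 0
      subst hi
      rcases hσi : σ (Sum.inl 0) with a | a
      · exact absurd (by rw [hσi, Subsingleton.elim a 0]) hσ
      · simp [hd_def, hσi, Tmat]
    · rcases hσi : σ (Sum.inr i) with a | a
      · have ha : a = 0 := Subsingleton.elim a 0
        subst ha
        simp [hd_def, hσi, Tmat]
      · have hdi : d (Sum.inr i) = 1 := by simp [hd_def, hσi]
        rw [hdi]
        simp only [hσi, Tmat, Matrix.fromBlocks_apply₂₂, Matrix.of_apply]
        compute_degree
  have hcoe : ∀ i, (Tmat A0 A1 (σ i) i).coeff (d i) = (tilde A0) (σ i) i := by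
    intro i
    rcases i with i | i
    · have hi : i = 0 := Subsingleton.elim i 0
      subst hi
      rcases hσi : σ (Sum.inl 0) with a | a
      · exact absurd (by rw [hσi, Subsingleton.elim a 0]) hσ
      · simp [hd_def, hσi, Tmat, tilde]
    · rcases hσi : σ (Sum.inr i) with a | a
      · have ha : a = 0 := Subsingleton.elim a 0
        subst ha
        simp [hd_def, hσi, Tmat, tilde]
      · have hdi : d (Sum.inr i) = 1 := by simp [hd_def, hσi]
        rw [hdi]
        simp only [hσi, Tmat, tilde, Matrix.fromBlocks_apply₂₂, Matrix.of_apply]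
        simp [Polynomial.coeff_X_one, Polynomial.coeff_C]
  have hne : (Sum.inl 0 : Fin 1 ⊕ Fin (k+1)) ≠ σ.symm (Sum.inl 0) :=
    fun h => hσ ((congrArg σ h).trans (σ.apply_symm_apply _))
  have hsum : ∑ i, d i = k := by
    have hmem : ∀ i : Fin 1 ⊕ Fin (k+1), (i = Sum.inl 0 ∨ σ i = Sum.inl 0) ↔
        i ∈ ({Sum.inl 0, σ.symm (Sum.inl 0)} : Finset (Fin 1 ⊕ Fin (k+1))) := by
      intro i
      simp [Finset.mem_insert, Finset.mem_singleton, Equiv.apply_eq_iff_eq_symm_apply]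
    have h1 : ∑ i, d i = ∑ i : Fin 1 ⊕ Fin (k+1),
        (if i ∈ ({Sum.inl 0, σ.symm (Sum.inl 0)} : Finset (Fin 1 ⊕ Fin (k+1))) then 0 else 1) :=
      Finset.sum_congr rfl fun i _ => by rw [hd_def]; simp only [hmem i]
    rw [h1, Finset.sum_ite, Finset.sum_const, Finset.sum_const, smul_eq_mul, smul_eq_mul,
      mul_zero, zero_add, mul_one]
    have h2 : Finset.univ.filter
        (fun i => i ∉ ({Sum.inl 0, σ.symm (Sum.inl 0)} : Finset (Fin 1 ⊕ Fin (k+1)))) =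
        Finset.univ \ ({Sum.inl 0, σ.symm (Sum.inl 0)} : Finset (Fin 1 ⊕ Fin (k+1))) := by
      ext i; simp
    rw [h2, Finset.card_sdiff_of_subset (Finset.subset_univ _), Finset.card_univ, Finset.card_pair hne]
    simp only [Fintype.card_sum, Fintype.card_fin]
    omega
  constructor
  · exact (Polynomial.natDegree_prod_le _ _).trans
      (le_of_le_of_eq (Finset.sum_le_sum fun i _ => hd i) hsum)
  · have h3 := coeff_prod_deg Finset.univ (fun i => Tmat A0 A1 (σ i) i) d (fun i _ => hd i)
    rw [hsum] at h3
    rw [h3]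
    exact Finset.prod_congr rfl fun i _ => hcoe i

set_option maxHeartbeats 1000000 in
private lemma master (k : ℕ) (A0 A1 : Matrix (Fin (k+1)) (Fin (k+1)) ℝ) :
    ∃ Q : Polynomial ℝ, Q.natDegree ≤ k ∧ Q.coeff k = (tilde A0).det ∧
      ∀ x : ℝ, (tilde (x • A0 + A1)).det = Q.eval x := by
  refine ⟨(Tmat A0 A1).det, ?_, ?_, ?_⟩
  · rw [Matrix.det_apply']
    refine Polynomial.natDegree_sum_le_of_forall_le _ _ fun σ _ => ?_
    refine Polynomial.natDegree_mul_le.trans ?_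
    rw [Polynomial.natDegree_intCast, zero_add]
    by_cases hσ : σ (Sum.inl 0) = Sum.inl 0
    · have hzero : Tmat A0 A1 (σ (Sum.inl 0)) (Sum.inl 0) = 0 := by
        rw [hσ]; simp [Tmat]
      have hz : (∏ i, Tmat A0 A1 (σ i) i) = 0 :=
        Finset.prod_eq_zero (Finset.mem_univ (Sum.inl 0)) hzero
      rw [hz]
      simp
    · exact (Tmat_key A0 A1 σ hσ).1
  · rw [Matrix.det_apply', Matrix.det_apply', Polynomial.finset_sum_coeff]
    refine Finset.sum_congr rfl fun σ _ => ?_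
    rw [Polynomial.coeff_intCast_mul]
    congr 1
    by_cases hσ : σ (Sum.inl 0) = Sum.inl 0
    · have hzero : Tmat A0 A1 (σ (Sum.inl 0)) (Sum.inl 0) = 0 := by
        rw [hσ]; simp [Tmat]
      have hzero' : tilde A0 (σ (Sum.inl 0)) (Sum.inl 0) = 0 := by
        rw [hσ]; simp [tilde]
      have hz : (∏ i, Tmat A0 A1 (σ i) i) = 0 :=
        Finset.prod_eq_zero (Finset.mem_univ (Sum.inl 0)) hzero
      have hz' : (∏ i, tilde A0 (σ i) i) = 0 :=
        Finset.prod_eq_zero (Finset.mem_univ (Sum.inl 0)) hzero'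
      rw [hz, hz']
      simp
    · exact (Tmat_key A0 A1 σ hσ).2
  · intro x
    have hmap : (Tmat A0 A1).map (Polynomial.eval x) = tilde (x • A0 + A1) := by
      ext i j
      rcases i with i | i <;> rcases j with j | j <;>
        · simp [Tmat, tilde, Matrix.map_apply]
          try ring
    have h := RingHom.map_det (Polynomial.evalRingHom x) (Tmat A0 A1)
    rw [RingHom.mapMatrix_apply] at h
    have hcoe : (Tmat A0 A1).map (Polynomial.evalRingHom x) =
        (Tmat A0 A1).map (Polynomial.eval x) := rfl
    rw [hcoe, hmap] at h
    rw [← h]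
    rfl

private lemma A0_posDef {m : ℕ} (q : Fin (m+1) → ℕ) (hq : Function.Injective q) :
    (Matrix.of fun i j : Fin (m+1) => (1 : ℝ) / ((q i : ℝ) + (q j : ℝ) + 1)).PosDef := by
  rw [Matrix.posDef_iff_dotProduct_mulVec]
  constructor
  · show _ = _
    ext i j
    simp only [Matrix.conjTranspose_apply, Matrix.of_apply, star_trivial]
    ring
  · intro x hx
    have star_eq : star x = x := by
      funext i; simp
    rw [star_eq]
    -- the polynomial F = ∑ i, x i * X ^ (q i)
    set F : ℝ[X] := ∑ i, Polynomial.C (x i) * Polynomial.X ^ (q i) with hF_def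
    obtain ⟨i0, hi0⟩ : ∃ i, x i ≠ 0 := by
      by_contra h
      push_neg at h
      exact hx (funext h)
    have hFc : F.coeff (q i0) = x i0 := by
      rw [hF_def, Polynomial.finset_sum_coeff]
      rw [Finset.sum_eq_single i0]
      · simp
      · intro b _ hb
        have : q i0 ≠ q b := fun h => hb (hq h.symm)
        simp [Polynomial.coeff_C_mul, Polynomial.coeff_X_pow, this]
      · simp
    have hFne : F ≠ 0 := fun h => hi0 (by rw [← hFc, h, Polynomial.coeff_zero])
    have heval : ∀ t : ℝ, F.eval t = ∑ i, x i * t ^ (q i) := by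
      intro t
      rw [hF_def]
      simp [Polynomial.eval_finset_sum]
    -- elementary integrals
    have hint : ∀ (c : ℝ) (n : ℕ), ∫ t in (0:ℝ)..1, c * t ^ n = c / ((n : ℝ) + 1) := by
      intro c n
      rw [intervalIntegral.integral_const_mul, integral_pow]
      norm_num
      ring
    -- the quadratic form equals an integral
    have hquad : x ⬝ᵥ ((Matrix.of fun i j : Fin (m+1) =>
        (1 : ℝ) / ((q i : ℝ) + (q j : ℝ) + 1)) *ᵥ x) =
        ∫ t in (0:ℝ)..1, (F.eval t) ^ 2 := by
      have expand : ∀ t : ℝ, (F.eval t) ^ 2 = ∑ i, ∑ j, (x i * x j) * t ^ (q i + q j) := by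
        intro t
        rw [heval t, sq, Finset.sum_mul_sum]
        exact Finset.sum_congr rfl fun i _ => Finset.sum_congr rfl fun j _ => by
          rw [pow_add]; ring
      have hcont : ∀ (i : Fin (m+1)), Continuous fun t : ℝ =>
          ∑ j, (x i * x j) * t ^ (q i + q j) :=
        fun i => continuous_finset_sum _ fun j _ =>
          (continuous_const.mul (continuous_pow _))
      have hswap : ∫ t in (0:ℝ)..1, (F.eval t) ^ 2 =
          ∑ i, ∑ j, (x i * x j) / (((q i + q j : ℕ) : ℝ) + 1) := by
        rw [intervalIntegral.integral_congr (g := fun t => ∑ i, ∑ j,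
            (x i * x j) * t ^ (q i + q j)) (fun t _ => expand t)]
        rw [intervalIntegral.integral_finset_sum
          (fun i _ => ((hcont i).intervalIntegrable _ _))]
        refine Finset.sum_congr rfl fun i _ => ?_
        rw [intervalIntegral.integral_finset_sum
          (fun j _ => ((show Continuous fun t : ℝ => (x i * x j) * t ^ (q i + q j) from
            continuous_const.mul (continuous_pow _)).intervalIntegrable _ _))]
        exact Finset.sum_congr rfl fun j _ => hint _ _
      rw [hswap]
      simp only [dotProduct, Matrix.mulVec, Matrix.of_apply, Finset.mul_sum]
      refine Finset.sum_congr rfl fun i _ => Finset.sum_congr rfl fun j _ => ?_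
      push_cast
      ring
    rw [hquad]
    -- positivity of the integral
    rw [intervalIntegral.integral_of_le zero_le_one]
    have hcont2 : Continuous fun t : ℝ => (F.eval t) ^ 2 := (F.continuous).pow 2
    rw [MeasureTheory.setIntegral_pos_iff_support_of_nonneg_ae
      (MeasureTheory.ae_of_all _ fun t => sq_nonneg _)
      (hcont2.integrableOn_Ioc)]
    have hroots : Set.Finite {t : ℝ | F.IsRoot t} := Polynomial.finite_setOf_isRoot hFne
    have hsub : Set.Ioc (0:ℝ) 1 \ {t : ℝ | F.IsRoot t} ⊆
        (Function.support fun t : ℝ => (F.eval t) ^ 2) ∩ Set.Ioc 0 1 := by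
      rintro t ⟨ht, hroot⟩
      refine ⟨?_, ht⟩
      simp only [Function.mem_support]
      intro h
      exact hroot ((pow_eq_zero_iff two_ne_zero).mp h)
    calc (0 : ENNReal) < MeasureTheory.volume (Set.Ioc (0:ℝ) 1 \ {t : ℝ | F.IsRoot t}) := by
          rw [MeasureTheory.measure_diff_null (hroots.measure_zero _)]
          simp
      _ ≤ _ := MeasureTheory.measure_mono hsub

private lemma det_tilde_pos {m : ℕ} (A : Matrix (Fin (m+1)) (Fin (m+1)) ℝ) (hA : A.PosDef) :
    0 < (tilde A).det := by
  have hdet : IsUnit A.det := hA.det_pos.ne'.isUnit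
  have := A.invertibleOfIsUnitDet hdet
  rw [tilde, Matrix.det_fromBlocks₂₂]
  refine mul_pos hA.det_pos ?_
  rw [Matrix.det_unique]
  have hinv : (⅟A) = A⁻¹ := Matrix.invOf_eq_nonsing_inv A
  have h1 : ((0 : Matrix (Fin 1) (Fin 1) ℝ) -
      (Matrix.of fun (_ : Fin 1) (_ : Fin (m+1)) => (1:ℝ)) * ⅟A *
        (Matrix.of fun (_ : Fin (m+1)) (_ : Fin 1) => (-1:ℝ))) default default =
      ∑ i, ∑ j, A⁻¹ i j := by
    simp [Matrix.sub_apply, Matrix.mul_apply, hinv, Finset.sum_mul]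
    exact Finset.sum_comm
  rw [h1]
  have hinvPD := hA.inv
  have hone : (fun _ => (1:ℝ) : Fin (m+1) → ℝ) ≠ 0 := by
    intro h
    exact one_ne_zero (congrFun h 0)
  have h2 := (Matrix.posDef_iff_dotProduct_mulVec.mp hinvPD).2 hone
  have h3 : star (fun _ => (1:ℝ) : Fin (m+1) → ℝ) ⬝ᵥ (A⁻¹ *ᵥ fun _ => (1:ℝ)) =
      ∑ i, ∑ j, A⁻¹ i j := by
    simp [dotProduct, Matrix.mulVec]
  rwa [h3] at h2

/-- For `0 = p₀ < p₁ < ⋯ < p_N` and `𝒜(ξ) = |ξ|² A₀ + A₁`, there is a real polynomial `Q` of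
degree exactly `N` with leading coefficient `det Ã₀` such that
`det 𝒜̃(ξ) = Q(|ξ|²)` for all `ξ ∈ ℝⁿ`. -/
theorem stmt_4 (n N : ℕ) (hn : 1 ≤ n) (p : Fin (N + 1) → ℕ)
    (hp0 : p 0 = 0) (hp : StrictMono p) :
    ∃ Q : Polynomial ℝ, Q.degree = (N : WithBot ℕ) ∧
      Q.coeff N = (tilde (Matrix.of fun i j : Fin (N + 1) =>
        (1 : ℝ) / ((p i : ℝ) + (p j : ℝ) + 1))).det ∧
      ∀ ξ : EuclideanSpace ℝ (Fin n),
        (tilde (‖ξ‖ ^ 2 • (Matrix.of fun i j : Fin (N + 1) =>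
            (1 : ℝ) / ((p i : ℝ) + (p j : ℝ) + 1))
          + Matrix.of fun i j : Fin (N + 1) =>
            ((p i : ℝ) * (p j : ℝ)) / ((p i : ℝ) + (p j : ℝ) - 1))).det
        = Q.eval (‖ξ‖ ^ 2) := by
  obtain ⟨Q, hdeg, hcoeff, heval⟩ := master N
    (Matrix.of fun i j : Fin (N + 1) => (1 : ℝ) / ((p i : ℝ) + (p j : ℝ) + 1))
    (Matrix.of fun i j : Fin (N + 1) => ((p i : ℝ) * (p j : ℝ)) / ((p i : ℝ) + (p j : ℝ) - 1))
  refine ⟨Q, ?_, hcoeff, fun ξ => heval _⟩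
  have hpos := det_tilde_pos _ (A0_posDef p hp.injective)
  refine Polynomial.degree_eq_of_le_of_coeff_ne_zero ?_ ?_
  · exact Polynomial.natDegree_le_iff_degree_le.mp hdeg
  · rw [hcoeff]
    exact hpos.ne'
end

section
/- Let N, N* ≥ 0 be integers, let 0 = p₀ < p₁ < ⋯ < p_{N*} be integers, and let ρ₁, ρ₂, g, h₁, h₂ be real numbers. Then for every ξ ∈ ℝⁿ and every ω ∈ ℂ, the determinant of the complex (N+N*+3)×(N+N*+3) block matrix M = [[(ρ₂−ρ₁)g, iρ₁ω 𝟙ᵀ_{N+1}, −iρ₂ω 𝟙ᵀ_{N*+1}],[−i h₁ ω 𝟙_{N+1}, 𝒜₁(h₁ξ), O],[i h₂ ω 𝟙_{N*+1}, O, 𝒜₂(h₂ξ)]] satisfies det M = (ρ₂−ρ₁) g det 𝒜₁(h₁ξ) det 𝒜₂(h₂ξ) − ω² ( ρ₁ h₁ det 𝒜̃₁(h₁ξ) det 𝒜₂(h₂ξ) + ρ₂ h₂ det 𝒜̃₂(h₂ξ) det 𝒜₁(h₁ξ) ). -/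
/-- The matrix `A_{1,0} = (1/(2(i+j)+1))`. -/
noncomputable def matA10 (N : ℕ) : Matrix (Fin (N + 1)) (Fin (N + 1)) ℝ :=
  Matrix.of fun i j => (1 : ℝ) / (2 * ((i : ℕ) + (j : ℕ)) + 1)

/-- The matrix `A_{1,1} = (4ij/(2(i+j)−1))`. -/
noncomputable def matA11 (N : ℕ) : Matrix (Fin (N + 1)) (Fin (N + 1)) ℝ :=
  Matrix.of fun i j => (4 * (i : ℕ) * (j : ℕ) : ℝ) / ((2 * ((i : ℕ) + (j : ℕ)) : ℝ) - 1)

/-- The matrix `A_{2,0} = (1/(pᵢ+pⱼ+1))`. -/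
noncomputable def matA20 (M : ℕ) (p : Fin (M + 1) → ℕ) :
    Matrix (Fin (M + 1)) (Fin (M + 1)) ℝ :=
  Matrix.of fun i j => (1 : ℝ) / ((p i : ℝ) + (p j : ℝ) + 1)

/-- The matrix `A_{2,1} = (pᵢpⱼ/(pᵢ+pⱼ−1))` (with the convention `0/0 = 0`). -/
noncomputable def matA21 (M : ℕ) (p : Fin (M + 1) → ℕ) :
    Matrix (Fin (M + 1)) (Fin (M + 1)) ℝ :=
  Matrix.of fun i j => ((p i : ℝ) * (p j : ℝ)) / ((p i : ℝ) + (p j : ℝ) - 1)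

section Aux

variable {R : Type*} [CommRing R] {α β : Type*} [Fintype α] [DecidableEq α]
  [Fintype β] [DecidableEq β]


/-- generic tilde over any ring -/
def tildeG (A : Matrix α α R) : Matrix (Fin 1 ⊕ α) (Fin 1 ⊕ α) R :=
  Matrix.fromBlocks 0 (Matrix.of fun _ _ => (1 : R)) (Matrix.of fun _ _ => (-1 : R)) A

lemma border_det (A : Matrix α α R) (t s : R) :
    (Matrix.fromBlocks (Matrix.of fun _ _ : Fin 1 => (0 : R))
      (Matrix.of fun _ _ => t) (Matrix.of fun _ _ => s) A).det
    = t * (-s) * (tildeG A).det := by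
  have hX : (Matrix.fromBlocks (Matrix.of fun _ _ : Fin 1 => (0 : R))
      (Matrix.of fun _ _ => t) (Matrix.of fun _ _ => s) A)
      = (Matrix.diagonal (Sum.elim (fun _ => t) (fun _ => 1)) * tildeG A) *
        Matrix.diagonal (Sum.elim (fun _ => -s) (fun _ => 1)) := by
    ext i j
    rcases i with i | i <;> rcases j with j | j <;>
      simp [tildeG, Matrix.diagonal_mul, Matrix.mul_diagonal, Matrix.fromBlocks]
  rw [hX, Matrix.det_mul, Matrix.det_mul, Matrix.det_diagonal, Matrix.det_diagonal]
  simp [Fintype.prod_sum_type]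
  ring

def e3 (α β : Type*) : (α ⊕ (Fin 1 ⊕ β)) ≃ (Fin 1 ⊕ (α ⊕ β)) :=
  (Equiv.sumAssoc α (Fin 1) β).symm.trans
    (((Equiv.sumComm α (Fin 1)).sumCongr (Equiv.refl β)).trans
      (Equiv.sumAssoc (Fin 1) α β))

lemma key_det (B : Matrix α α R) (C : Matrix β β R) (a t₁ t₂ s₁ s₂ : R) :
    (Matrix.fromBlocks (Matrix.of fun _ _ : Fin 1 => a)
      (Matrix.of fun (_ : Fin 1) (k : α ⊕ β) =>
        Sum.elim (fun _ => t₁) (fun _ => t₂) k)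
      (Matrix.of fun (k : α ⊕ β) (_ : Fin 1) =>
        Sum.elim (fun _ => s₁) (fun _ => s₂) k)
      (Matrix.fromBlocks B 0 0 C)).det
    = a * B.det * C.det + (t₁ * (-s₁)) * (tildeG B).det * C.det
      + (t₂ * (-s₂)) * (tildeG C).det * B.det := by
  set M := Matrix.fromBlocks (Matrix.of fun _ _ : Fin 1 => a)
      (Matrix.of fun (_ : Fin 1) (k : α ⊕ β) =>
        Sum.elim (fun _ => t₁) (fun _ => t₂) k)
      (Matrix.of fun (k : α ⊕ β) (_ : Fin 1) =>
        Sum.elim (fun _ => s₁) (fun _ => s₂) k)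
      (Matrix.fromBlocks B 0 0 C) with hM
  set j₀ : Fin 1 ⊕ (α ⊕ β) := Sum.inl 0 with hj₀
  set v₁ : Fin 1 ⊕ (α ⊕ β) → R := Sum.elim (fun _ => a) (fun _ => 0) with hv₁
  set v₂ : Fin 1 ⊕ (α ⊕ β) → R :=
    Sum.elim (fun _ => 0) (Sum.elim (fun _ => s₁) (fun _ => 0)) with hv₂
  set v₃ : Fin 1 ⊕ (α ⊕ β) → R :=
    Sum.elim (fun _ => 0) (Sum.elim (fun _ => 0) (fun _ => s₂)) with hv₃
  have hsplit : M = M.updateCol j₀ (v₁ + (v₂ + v₃)) := by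
    ext i j
    rcases j with j | j
    · fin_cases j
      rcases i with i | (i | i) <;>
        simp [hM, Matrix.updateCol_apply, hj₀, hv₁, hv₂, hv₃, Matrix.fromBlocks]
    · rcases i with i | (i | i) <;>
        simp [hM, Matrix.updateCol_apply, hj₀, Matrix.fromBlocks]
  have hdet : M.det = (M.updateCol j₀ v₁).det + ((M.updateCol j₀ v₂).det
      + (M.updateCol j₀ v₃).det) := by
    nth_rewrite 1 [hsplit]
    rw [Matrix.det_updateCol_add, Matrix.det_updateCol_add]
  -- term 1
  have h1 : (M.updateCol j₀ v₁).det = a * B.det * C.det := by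
    have : M.updateCol j₀ v₁ = Matrix.fromBlocks (Matrix.of fun _ _ : Fin 1 => a)
        (Matrix.of fun (_ : Fin 1) (k : α ⊕ β) =>
          Sum.elim (fun _ => t₁) (fun _ => t₂) k) 0 (Matrix.fromBlocks B 0 0 C) := by
      ext i j
      rcases j with j | j
      · fin_cases j
        rcases i with i | (i | i) <;>
          simp [hM, Matrix.updateCol_apply, hj₀, hv₁, Matrix.fromBlocks]
      · rcases i with i | (i | i) <;>
          simp [hM, Matrix.updateCol_apply, hj₀, Matrix.fromBlocks]
    rw [this, Matrix.det_fromBlocks_zero₂₁, Matrix.det_fromBlocks_zero₂₁,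
      Matrix.det_fin_one]
    simp [mul_assoc]
  -- term 2
  have h2 : (M.updateCol j₀ v₂).det = t₁ * (-s₁) * (tildeG B).det * C.det := by
    rw [← Matrix.det_submatrix_equiv_self (Equiv.sumAssoc (Fin 1) α β)
      (M.updateCol j₀ v₂)]
    have heq : (M.updateCol j₀ v₂).submatrix (Equiv.sumAssoc (Fin 1) α β)
        (Equiv.sumAssoc (Fin 1) α β)
        = Matrix.fromBlocks
            (Matrix.fromBlocks (Matrix.of fun _ _ : Fin 1 => (0 : R))
              (Matrix.of fun _ _ => t₁) (Matrix.of fun _ _ => s₁) B)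
            (Matrix.of fun i _ => Sum.elim (fun _ => t₂) (fun _ => (0 : R)) i)
            0 C := by
      ext i j
      rcases i with (i | i) | i <;> rcases j with (j | j) | j <;>
        simp [hM, Matrix.updateCol_apply, hj₀, hv₂, Matrix.fromBlocks,
          Equiv.sumAssoc, Fin.fin_one_eq_zero]
    rw [heq, Matrix.det_fromBlocks_zero₂₁, border_det]
  -- term 3
  have h3 : (M.updateCol j₀ v₃).det = t₂ * (-s₂) * (tildeG C).det * B.det := by
    rw [← Matrix.det_submatrix_equiv_self (e3 α β) (M.updateCol j₀ v₃)]
    have heq : (M.updateCol j₀ v₃).submatrix (e3 α β) (e3 α β)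
        = Matrix.fromBlocks B 0
            (Matrix.of fun (i : Fin 1 ⊕ β) _ =>
              Sum.elim (fun _ => t₁) (fun _ => (0 : R)) i)
            (Matrix.fromBlocks (Matrix.of fun _ _ : Fin 1 => (0 : R))
              (Matrix.of fun _ _ => t₂) (Matrix.of fun _ _ => s₂) C) := by
      ext i j
      rcases i with i | (i | i) <;> rcases j with j | (j | j) <;>
        simp [hM, Matrix.updateCol_apply, hj₀, hv₃, Matrix.fromBlocks, e3,
          Equiv.sumAssoc, Fin.fin_one_eq_zero, Equiv.sumComm, Equiv.sumCongr]
    rw [heq, Matrix.det_fromBlocks_zero₁₂, border_det]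
    ring
  rw [hdet, h1, h2, h3]
  ring

lemma det_map_ofReal {m : Type*} [Fintype m] [DecidableEq m] (A : Matrix m m ℝ) :
    ((A.det : ℝ) : ℂ) = (A.map Complex.ofReal).det := by
  have := RingHom.map_det Complex.ofRealHom A
  exact this

lemma tilde_map {m : ℕ} (A : Matrix (Fin m) (Fin m) ℝ) :
    (tilde A).map Complex.ofReal
    = tildeG (A.map Complex.ofReal) := by
  ext i j
  rcases i with i | i <;> rcases j with j | j <;>
    simp [tilde, tildeG, Matrix.fromBlocks]


end Aux

/-- Expansion of the determinant giving the linear dispersion relation of the Kakinuma model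
linearized around the rest state over a flat bottom. -/
theorem stmt_7 (n N Nstar : ℕ) (hn : 1 ≤ n) (p : Fin (Nstar + 1) → ℕ)
    (hp0 : p 0 = 0) (hp : StrictMono p)
    (ρ₁ ρ₂ g h₁ h₂ : ℝ) (ξ : EuclideanSpace ℝ (Fin n)) (ω : ℂ) :
    (Matrix.fromBlocks
        (Matrix.of fun _ _ : Fin 1 => (((ρ₂ - ρ₁) * g : ℝ) : ℂ))
        (Matrix.of fun (_ : Fin 1) (k : Fin (N + 1) ⊕ Fin (Nstar + 1)) =>
          Sum.elim (fun _ => Complex.I * (ρ₁ : ℂ) * ω)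
            (fun _ => -(Complex.I * (ρ₂ : ℂ) * ω)) k)
        (Matrix.of fun (k : Fin (N + 1) ⊕ Fin (Nstar + 1)) (_ : Fin 1) =>
          Sum.elim (fun _ => -(Complex.I * (h₁ : ℂ) * ω))
            (fun _ => Complex.I * (h₂ : ℂ) * ω) k)
        (Matrix.fromBlocks
          ((‖(h₁ • ξ : EuclideanSpace ℝ (Fin n))‖ ^ 2 • matA10 N + matA11 N).map
            Complex.ofReal)
          0 0
          ((‖(h₂ • ξ : EuclideanSpace ℝ (Fin n))‖ ^ 2 • matA20 Nstar p
              + matA21 Nstar p).map Complex.ofReal))).det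
    = (((ρ₂ - ρ₁) * g
          * (‖(h₁ • ξ : EuclideanSpace ℝ (Fin n))‖ ^ 2 • matA10 N + matA11 N).det
          * (‖(h₂ • ξ : EuclideanSpace ℝ (Fin n))‖ ^ 2 • matA20 Nstar p
              + matA21 Nstar p).det : ℝ) : ℂ)
      - ω ^ 2 * ((ρ₁ * h₁
            * (tilde (‖(h₁ • ξ : EuclideanSpace ℝ (Fin n))‖ ^ 2 • matA10 N + matA11 N)).det
            * (‖(h₂ • ξ : EuclideanSpace ℝ (Fin n))‖ ^ 2 • matA20 Nstar p
                + matA21 Nstar p).det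
          + ρ₂ * h₂
            * (tilde (‖(h₂ • ξ : EuclideanSpace ℝ (Fin n))‖ ^ 2 • matA20 Nstar p
                + matA21 Nstar p)).det
            * (‖(h₁ • ξ : EuclideanSpace ℝ (Fin n))‖ ^ 2 • matA10 N + matA11 N).det
          : ℝ) : ℂ) := by
  rw [key_det ((‖(h₁ • ξ : EuclideanSpace ℝ (Fin n))‖ ^ 2 • matA10 N + matA11 N).map Complex.ofReal) ((‖(h₂ • ξ : EuclideanSpace ℝ (Fin n))‖ ^ 2 • matA20 Nstar p + matA21 Nstar p).map Complex.ofReal)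
    (((ρ₂ - ρ₁) * g : ℝ) : ℂ) (Complex.I * (ρ₁ : ℂ) * ω) (-(Complex.I * (ρ₂ : ℂ) * ω))
    (-(Complex.I * (h₁ : ℂ) * ω)) (Complex.I * (h₂ : ℂ) * ω)]
  rw [show (((ρ₂ - ρ₁) * g * (‖(h₁ • ξ : EuclideanSpace ℝ (Fin n))‖ ^ 2 • matA10 N + matA11 N).det * (‖(h₂ • ξ : EuclideanSpace ℝ (Fin n))‖ ^ 2 • matA20 Nstar p + matA21 Nstar p).det : ℝ) : ℂ)
      = (((ρ₂ - ρ₁) * g : ℝ) : ℂ) * (((‖(h₁ • ξ : EuclideanSpace ℝ (Fin n))‖ ^ 2 • matA10 N + matA11 N).det : ℝ):ℂ) * (((‖(h₂ • ξ : EuclideanSpace ℝ (Fin n))‖ ^ 2 • matA20 Nstar p + matA21 Nstar p).det:ℝ):ℂ) by push_cast; ring]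
  rw [← det_map_ofReal (‖(h₁ • ξ : EuclideanSpace ℝ (Fin n))‖ ^ 2 • matA10 N + matA11 N), ← det_map_ofReal (‖(h₂ • ξ : EuclideanSpace ℝ (Fin n))‖ ^ 2 • matA20 Nstar p + matA21 Nstar p)]
  have h1 := det_map_ofReal (tilde (‖(h₁ • ξ : EuclideanSpace ℝ (Fin n))‖ ^ 2 • matA10 N + matA11 N))
  have h2 := det_map_ofReal (tilde (‖(h₂ • ξ : EuclideanSpace ℝ (Fin n))‖ ^ 2 • matA20 Nstar p + matA21 Nstar p))
  rw [tilde_map] at h1 h2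
  push_cast [← h1, ← h2]
  linear_combination (((ρ₁:ℂ) * h₁ * ω^2
      * (((tilde (‖(h₁ • ξ : EuclideanSpace ℝ (Fin n))‖ ^ 2 • matA10 N + matA11 N)).det : ℝ):ℂ)
      * ((((‖(h₂ • ξ : EuclideanSpace ℝ (Fin n))‖ ^ 2 • matA20 Nstar p + matA21 Nstar p).det : ℝ)):ℂ))
    + ((ρ₂:ℂ) * h₂ * ω^2
      * (((tilde (‖(h₂ • ξ : EuclideanSpace ℝ (Fin n))‖ ^ 2 • matA20 Nstar p + matA21 Nstar p)).det : ℝ):ℂ)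
      * ((((‖(h₁ • ξ : EuclideanSpace ℝ (Fin n))‖ ^ 2 • matA10 N + matA11 N).det : ℝ)):ℂ))) * Complex.I_sq
end

section
/- Let N, N* ≥ 0 be integers, let 0 = p₀ < p₁ < ⋯ < p_{N*} be integers, let a, ρ₁, ρ₂, H₁, H₂ be real numbers, let u₁, u₂ ∈ ℝⁿ and ξ ∈ ℝⁿ, and let ω ∈ ℂ. Then the determinant of the complex (N+N*+3)×(N+N*+3) block matrix [[a, iρ₁(ω−u₁·ξ) 𝟙ᵀ_{N+1}, −iρ₂(ω−u₂·ξ) 𝟙ᵀ_{N*+1}],[−i H₁ (ω−u₁·ξ) 𝟙_{N+1}, (H₁|ξ|)² A_{1,0}, O],[i H₂ (ω−u₂·ξ) 𝟙_{N*+1}, O, (H₂|ξ|)² A_{2,0}]] equals H₁^{2N+1} H₂^{2N*+1} |ξ|^{2(N+N*+1)} · { a H₁ H₂ |ξ|² det A_{1,0} det A_{2,0} − ρ₁ H₂ (ω−u₁·ξ)² det Ã_{1,0} det A_{2,0} − ρ₂ H₁ (ω−u₂·ξ)² det Ã_{2,0} det A_{1,0} }. -/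
open scoped RealInnerProductSpace

section KakinumaAux
open Matrix

variable {κ₁ κ₂ : Type*} [Fintype κ₁] [Fintype κ₂] [DecidableEq κ₁] [DecidableEq κ₂]

noncomputable def ctilde (A : Matrix κ₁ κ₁ ℂ) : Matrix (Fin 1 ⊕ κ₁) (Fin 1 ⊕ κ₁) ℂ :=
  fromBlocks 0 (of fun _ _ => (1:ℂ)) (of fun _ _ => (-1:ℂ)) A

lemma det_bordered (b c : ℂ) (M : Matrix κ₁ κ₁ ℂ) :
    (fromBlocks (0 : Matrix (Fin 1) (Fin 1) ℂ) (of fun _ _ => b) (of fun _ _ => c) M).det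
      = -(b * c) * (ctilde M).det := by
  set T1 : Matrix (Fin 1 ⊕ κ₁) (Fin 1 ⊕ κ₁) ℂ :=
    fromBlocks 0 (of fun _ _ => b) (of fun _ _ => (-1:ℂ)) M with hT1
  have h1 : fromBlocks (0 : Matrix (Fin 1) (Fin 1) ℂ) (of fun _ _ => b) (of fun _ _ => c) M
      = T1.updateCol (Sum.inl 0) ((-c) • fun i => T1 i (Sum.inl 0)) := by
    ext i j
    rcases i with i | i <;> rcases j with j | j <;>
      simp [hT1, updateCol_apply, fromBlocks, Fin.fin_one_eq_zero]
  have h2 : T1 = (ctilde M).updateRow (Sum.inl 0) (b • fun j => (ctilde M) (Sum.inl 0) j) := by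
    ext i j
    rcases i with i | i <;> rcases j with j | j <;>
      simp [hT1, ctilde, updateRow_apply, fromBlocks, Fin.fin_one_eq_zero]
  rw [h1, det_updateCol_smul, updateCol_eq_self, h2, det_updateRow_smul,
    updateRow_eq_self]
  ring

lemma key (A : Matrix κ₁ κ₁ ℂ) (B : Matrix κ₂ κ₂ ℂ) (a b₁ b₂ c₁ c₂ : ℂ) :
    (fromBlocks (of fun _ _ : Fin 1 => a)
      (of fun (_ : Fin 1) (j : κ₁ ⊕ κ₂) => Sum.elim (fun _ => b₁) (fun _ => b₂) j)
      (of fun (i : κ₁ ⊕ κ₂) (_ : Fin 1) => Sum.elim (fun _ => c₁) (fun _ => c₂) i)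
      (fromBlocks A 0 0 B)).det
    = a * A.det * B.det - b₁ * c₁ * (ctilde A).det * B.det
      - b₂ * c₂ * (ctilde B).det * A.det := by
  set M : Matrix (Fin 1 ⊕ (κ₁ ⊕ κ₂)) (Fin 1 ⊕ (κ₁ ⊕ κ₂)) ℂ :=
    fromBlocks (of fun _ _ : Fin 1 => a)
      (of fun (_ : Fin 1) (j : κ₁ ⊕ κ₂) => Sum.elim (fun _ => b₁) (fun _ => b₂) j)
      (of fun (i : κ₁ ⊕ κ₂) (_ : Fin 1) => Sum.elim (fun _ => c₁) (fun _ => c₂) i)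
      (fromBlocks A 0 0 B) with hM
  set f : (Fin 1 ⊕ (κ₁ ⊕ κ₂)) → ℂ := Sum.elim (fun _ => a) (fun _ => 0) with hf
  set g : (Fin 1 ⊕ (κ₁ ⊕ κ₂)) → ℂ :=
    Sum.elim (fun _ => 0) (Sum.elim (fun _ => b₁) (fun _ => b₂)) with hg
  have hsplit : M = M.updateRow (Sum.inl 0) (f + g) := by
    ext i j
    rcases i with i | i <;> rcases j with j | j <;>
      simp [hM, hf, hg, updateRow_apply, fromBlocks, Fin.fin_one_eq_zero]
  have detM : M.det = (M.updateRow (Sum.inl 0) f).det + (M.updateRow (Sum.inl 0) g).det := by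
    conv_lhs => rw [hsplit]
    rw [det_updateRow_add]
  -- a-term
  have hMa : M.updateRow (Sum.inl 0) f
      = fromBlocks (of fun _ _ : Fin 1 => a) 0
          (of fun (i : κ₁ ⊕ κ₂) (_ : Fin 1) => Sum.elim (fun _ => c₁) (fun _ => c₂) i)
          (fromBlocks A 0 0 B) := by
    ext i j
    rcases i with i | i <;> rcases j with j | j <;>
      simp [hM, hf, updateRow_apply, fromBlocks, Fin.fin_one_eq_zero]
  have deta : (M.updateRow (Sum.inl 0) f).det = a * (A.det * B.det) := by
    rw [hMa, det_fromBlocks_zero₁₂, det_fromBlocks_zero₁₂]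
    simp [det_fin_one]
  -- b-term: split the first column
  set M0 := M.updateRow (Sum.inl 0) g with hM0
  set u₁ : (Fin 1 ⊕ (κ₁ ⊕ κ₂)) → ℂ :=
    Sum.elim (fun _ => 0) (Sum.elim (fun _ => c₁) (fun _ => 0)) with hu₁
  set u₂ : (Fin 1 ⊕ (κ₁ ⊕ κ₂)) → ℂ :=
    Sum.elim (fun _ => 0) (Sum.elim (fun _ => 0) (fun _ => c₂)) with hu₂
  have hsplit0 : M0 = M0.updateCol (Sum.inl 0) (u₁ + u₂) := by
    ext i j
    rcases j with j | j
    · rcases i with i | i | i <;>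
        simp [hM0, hM, hg, hu₁, hu₂, updateRow_apply, updateCol_apply, fromBlocks,
          Fin.fin_one_eq_zero]
    · simp [updateCol_apply]
  have detM0 : M0.det = (M0.updateCol (Sum.inl 0) u₁).det
      + (M0.updateCol (Sum.inl 0) u₂).det := by
    conv_lhs => rw [hsplit0]
    rw [det_updateCol_add]
  have d1 : (M0.updateCol (Sum.inl 0) u₁).det = -(b₁ * c₁) * (ctilde A).det * B.det := by
    have h1 : (M0.updateCol (Sum.inl 0) u₁).submatrix
          (Equiv.sumAssoc (Fin 1) κ₁ κ₂) (Equiv.sumAssoc (Fin 1) κ₁ κ₂)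
        = fromBlocks (fromBlocks 0 (of fun _ _ => b₁) (of fun _ _ => c₁) A)
            (of fun (i : Fin 1 ⊕ κ₁) (_ : κ₂) => Sum.elim (fun _ => b₂) (fun _ => 0) i) 0 B := by
      ext i j
      rcases i with (i | i) | i <;> rcases j with (j | j) | j <;>
        simp [hM0, hM, hg, hu₁, updateRow_apply, updateCol_apply, fromBlocks,
          Fin.fin_one_eq_zero]
    rw [← det_submatrix_equiv_self (Equiv.sumAssoc (Fin 1) κ₁ κ₂), h1,
      det_fromBlocks_zero₂₁, det_bordered]
  have d2 : (M0.updateCol (Sum.inl 0) u₂).det = -(b₂ * c₂) * (ctilde B).det * A.det := by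
    set e₂ : (Fin 1 ⊕ κ₂) ⊕ κ₁ ≃ Fin 1 ⊕ (κ₁ ⊕ κ₂) :=
      (Equiv.sumAssoc (Fin 1) κ₂ κ₁).trans
        ((Equiv.refl (Fin 1)).sumCongr (Equiv.sumComm κ₂ κ₁)) with he₂
    have h2 : (M0.updateCol (Sum.inl 0) u₂).submatrix e₂ e₂
        = fromBlocks (fromBlocks 0 (of fun _ _ => b₂) (of fun _ _ => c₂) B)
            (of fun (i : Fin 1 ⊕ κ₂) (_ : κ₁) => Sum.elim (fun _ => b₁) (fun _ => 0) i) 0 A := by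
      ext i j
      rcases i with (i | i) | i <;> rcases j with (j | j) | j <;>
        simp [hM0, hM, hg, hu₂, he₂, updateRow_apply, updateCol_apply, fromBlocks,
          Fin.fin_one_eq_zero]
    rw [← det_submatrix_equiv_self e₂, h2, det_fromBlocks_zero₂₁, det_bordered]
  rw [detM, deta, detM0, d1, d2]
  ring

lemma det_ctilde_fin_one (M : Matrix (Fin 1) (Fin 1) ℂ) : (ctilde M).det = 1 := by
  have h0 : (finSumFinEquiv.symm (0 : Fin 2) : Fin 1 ⊕ Fin 1) = Sum.inl 0 := by
    rw [Equiv.symm_apply_eq]; rfl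
  have h1 : (finSumFinEquiv.symm (1 : Fin 2) : Fin 1 ⊕ Fin 1) = Sum.inr 0 := by
    rw [Equiv.symm_apply_eq]; rfl
  rw [← det_submatrix_equiv_self finSumFinEquiv.symm (ctilde M), det_fin_two]
  simp [h0, h1, ctilde, fromBlocks]

lemma det_ctilde_smul (m : ℕ) (s : ℂ) (M : Matrix (Fin (m + 1)) (Fin (m + 1)) ℂ) :
    (ctilde (s • M)).det = s ^ m * (ctilde M).det := by
  rcases eq_or_ne s 0 with rfl | hs
  · rcases Nat.eq_zero_or_pos m with rfl | hm
    · simp [det_ctilde_fin_one]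
    · have h1 : (ctilde ((0 : ℂ) • M)).det = 0 := by
        apply det_zero_of_row_eq (i := Sum.inr 0) (j := Sum.inr 1)
        · simp [Fin.ext_iff]
          omega
        · ext j; rcases j with j | j <;> simp [ctilde, fromBlocks]
      rw [h1, zero_pow (by omega), zero_mul]
  · have hfact : (fromBlocks (s • (1 : Matrix (Fin 1) (Fin 1) ℂ)) 0 0
          (1 : Matrix (Fin (m + 1)) (Fin (m + 1)) ℂ)) * ctilde (s • M)
        = ctilde M * (fromBlocks (1 : Matrix (Fin 1) (Fin 1) ℂ) 0 0
          (s • (1 : Matrix (Fin (m + 1)) (Fin (m + 1)) ℂ))) := by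
      rw [ctilde, ctilde, fromBlocks_multiply, fromBlocks_multiply]
      congr 1 <;> ext i j <;>
        simp [Matrix.smul_apply, Matrix.mul_apply, Finset.mul_sum, mul_comm]
    have := congrArg Matrix.det hfact
    rw [det_mul, det_mul, det_fromBlocks_zero₁₂, det_fromBlocks_zero₁₂, det_smul, det_smul,
      det_one, det_one] at this
    simp only [Fintype.card_fin, pow_one, mul_one, one_mul] at this
    have h2 : s * (ctilde (s • M)).det = s * (s ^ m * (ctilde M).det) := by
      rw [this]; ring
    exact mul_left_cancel₀ hs h2

lemma ctilde_map (m : ℕ) (A : Matrix (Fin m) (Fin m) ℝ) :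
    (tilde A).map Complex.ofReal = ctilde (A.map Complex.ofReal) := by
  ext i j
  rcases i with i | i <;> rcases j with j | j <;>
    simp [tilde, ctilde, fromBlocks, Matrix.map_apply]

lemma det_ctilde_map (m : ℕ) (A : Matrix (Fin m) (Fin m) ℝ) :
    (ctilde (A.map Complex.ofReal)).det = ((tilde A).det : ℂ) := by
  rw [← ctilde_map]
  exact (RingHom.map_det Complex.ofRealHom (tilde A)).symm

lemma det_map (m : ℕ) (A : Matrix (Fin m) (Fin m) ℝ) :
    (A.map Complex.ofReal).det = (A.det : ℂ) :=
  (RingHom.map_det Complex.ofRealHom A).symm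

lemma smul_map (m : ℕ) (s : ℝ) (A : Matrix (Fin m) (Fin m) ℝ) :
    (s • A).map Complex.ofReal = (s : ℂ) • (A.map Complex.ofReal) := by
  ext i j
  simp [Matrix.map_apply, Matrix.smul_apply]

end KakinumaAux

/-- Expansion of the determinant giving the frozen-coefficient dispersion relation of the
Kakinuma model linearized around an arbitrary flow. -/
theorem stmt_9 (n N Nstar : ℕ) (hn : 1 ≤ n) (p : Fin (Nstar + 1) → ℕ)
    (hp0 : p 0 = 0) (hp : StrictMono p)
    (a ρ₁ ρ₂ H₁ H₂ : ℝ) (u₁ u₂ ξ : EuclideanSpace ℝ (Fin n)) (ω : ℂ) :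
    (Matrix.fromBlocks
        (Matrix.of fun _ _ : Fin 1 => ((a : ℝ) : ℂ))
        (Matrix.of fun (_ : Fin 1) (k : Fin (N + 1) ⊕ Fin (Nstar + 1)) =>
          Sum.elim
            (fun _ => Complex.I * (ρ₁ : ℂ) * (ω - ((⟪u₁, ξ⟫ : ℝ) : ℂ)))
            (fun _ => -(Complex.I * (ρ₂ : ℂ) * (ω - ((⟪u₂, ξ⟫ : ℝ) : ℂ)))) k)
        (Matrix.of fun (k : Fin (N + 1) ⊕ Fin (Nstar + 1)) (_ : Fin 1) =>
          Sum.elim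
            (fun _ => -(Complex.I * (H₁ : ℂ) * (ω - ((⟪u₁, ξ⟫ : ℝ) : ℂ))))
            (fun _ => Complex.I * (H₂ : ℂ) * (ω - ((⟪u₂, ξ⟫ : ℝ) : ℂ))) k)
        (Matrix.fromBlocks
          ((((H₁ * ‖ξ‖) ^ 2 • matA10 N).map Complex.ofReal)) 0 0
          (((H₂ * ‖ξ‖) ^ 2 • matA20 Nstar p).map Complex.ofReal))).det
    = ((H₁ ^ (2 * N + 1) * H₂ ^ (2 * Nstar + 1) * ‖ξ‖ ^ (2 * (N + Nstar + 1)) : ℝ) : ℂ)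
      * (((a * H₁ * H₂ * ‖ξ‖ ^ 2 * (matA10 N).det * (matA20 Nstar p).det : ℝ) : ℂ)
        - ((ρ₁ * H₂ * (tilde (matA10 N)).det * (matA20 Nstar p).det : ℝ) : ℂ)
            * (ω - ((⟪u₁, ξ⟫ : ℝ) : ℂ)) ^ 2
        - ((ρ₂ * H₁ * (tilde (matA20 Nstar p)).det * (matA10 N).det : ℝ) : ℂ)
            * (ω - ((⟪u₂, ξ⟫ : ℝ) : ℂ)) ^ 2) := by
  rw [smul_map _ ((H₁ * ‖ξ‖) ^ 2) (matA10 N), smul_map _ ((H₂ * ‖ξ‖) ^ 2) (matA20 Nstar p)]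
  rw [key]
  rw [Matrix.det_smul, Matrix.det_smul, det_ctilde_smul, det_ctilde_smul, det_ctilde_map, det_ctilde_map,
    det_map, det_map]
  simp only [Fintype.card_fin]
  push_cast
  linear_combination ((ρ₁:ℂ) * (H₁:ℂ) * (ω - ((⟪u₁, ξ⟫ : ℝ) : ℂ))^2 *
      (((H₁:ℂ) * (‖ξ‖:ℂ))^2)^N * ((tilde (matA10 N)).det : ℂ) *
      (((H₂:ℂ) * (‖ξ‖:ℂ))^2)^(Nstar+1) * ((matA20 Nstar p).det : ℂ)
    + (ρ₂:ℂ) * (H₂:ℂ) * (ω - ((⟪u₂, ξ⟫ : ℝ) : ℂ))^2 *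
      (((H₂:ℂ) * (‖ξ‖:ℂ))^2)^Nstar * ((tilde (matA20 Nstar p)).det : ℂ) *
      (((H₁:ℂ) * (‖ξ‖:ℂ))^2)^(N+1) * ((matA10 N).det : ℂ)) * Complex.I_sq
end

section
/- Let ρ₁, ρ₂, H₁, H₂, α₁, α₂ be positive real numbers, a ∈ ℝ, and u₁, u₂ ∈ ℝⁿ. Then the following are equivalent: (i) for every ξ ∈ ℝⁿ, every complex root ω of the quadratic polynomial (ρ₁/(H₁α₁)) (ω − u₁·ξ)² + (ρ₂/(H₂α₂)) (ω − u₂·ξ)² − a|ξ|² is real; (ii) a − (ρ₁ρ₂/(ρ₁H₂α₂ + ρ₂H₁α₁)) |u₂ − u₁|² ≥ 0. -/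
open scoped RealInnerProductSpace

lemma sq_eq_real_nonneg_im (z : ℂ) (t : ℝ) (ht : 0 ≤ t) (h : z ^ 2 = (t : ℂ)) :
    z.im = 0 := by
  have h1 : (z ^ 2).im = 0 := by rw [h]; simp
  have h2 : (z ^ 2).re = t := by rw [h]; simp
  simp [Complex.sq_norm, pow_two, Complex.mul_im, Complex.mul_re] at h1 h2
  have h3 : z.re * z.im = 0 := by linarith
  rcases mul_eq_zero.1 h3 with h | h
  · nlinarith
  · exact h

lemma quad_identity (A B p q a s : ℝ) (hA : 0 < A) (hB : 0 < B) (ω : ℂ) :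
    ((A : ℝ) : ℂ) * (ω - (p : ℂ)) ^ 2 + ((B : ℝ) : ℂ) * (ω - (q : ℂ)) ^ 2 - ((a * s : ℝ) : ℂ)
      = ((A + B : ℝ) : ℂ) * ((ω - (((A * p + B * q) / (A + B) : ℝ) : ℂ)) ^ 2
          - (((a * s - A * B / (A + B) * (p - q) ^ 2) / (A + B) : ℝ) : ℂ)) := by
  have h : ((A : ℂ) + B) ≠ 0 := by
    have : (A + B : ℝ) ≠ 0 := by positivity
    exact_mod_cast this
  push_cast
  field_simp
  ring

/-- The frozen-coefficient linear dispersion relation of the Kakinuma model has only real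
roots for every wave vector if and only if the stability condition holds. -/
theorem stmt_10 (n : ℕ) (hn : 1 ≤ n) (ρ₁ ρ₂ H₁ H₂ α₁ α₂ : ℝ)
    (hρ₁ : 0 < ρ₁) (hρ₂ : 0 < ρ₂) (hH₁ : 0 < H₁) (hH₂ : 0 < H₂)
    (hα₁ : 0 < α₁) (hα₂ : 0 < α₂) (a : ℝ) (u₁ u₂ : EuclideanSpace ℝ (Fin n)) :
    (∀ ξ : EuclideanSpace ℝ (Fin n), ∀ ω : ℂ,
        ((ρ₁ / (H₁ * α₁) : ℝ) : ℂ) * (ω - ((⟪u₁, ξ⟫ : ℝ) : ℂ)) ^ 2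
          + ((ρ₂ / (H₂ * α₂) : ℝ) : ℂ) * (ω - ((⟪u₂, ξ⟫ : ℝ) : ℂ)) ^ 2
          - ((a * ‖ξ‖ ^ 2 : ℝ) : ℂ) = 0 → ω.im = 0)
      ↔ 0 ≤ a - ρ₁ * ρ₂ / (ρ₁ * H₂ * α₂ + ρ₂ * H₁ * α₁) * ‖u₂ - u₁‖ ^ 2 := by
  set A : ℝ := ρ₁ / (H₁ * α₁) with hAdef
  set B : ℝ := ρ₂ / (H₂ * α₂) with hBdef
  have hA : 0 < A := by positivity
  have hB : 0 < B := by positivity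
  have hABpos : 0 < A + B := by positivity
  have hc : ρ₁ * ρ₂ / (ρ₁ * H₂ * α₂ + ρ₂ * H₁ * α₁) = A * B / (A + B) := by
    have d1 : (ρ₁ * H₂ * α₂ + ρ₂ * H₁ * α₁ : ℝ) ≠ 0 := by positivity
    have d2 : (A + B : ℝ) ≠ 0 := by positivity
    have d3 : (H₁ * α₁ : ℝ) ≠ 0 := by positivity
    have d4 : (H₂ * α₂ : ℝ) ≠ 0 := by positivity
    rw [hAdef, hBdef]
    rw [div_eq_div_iff d1 (by rw [hAdef, hBdef] at d2; exact d2)]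
    field_simp
  set c : ℝ := A * B / (A + B) with hcdef
  have hcpos : 0 < c := by positivity
  rw [hc]
  constructor
  · intro h1
    by_contra hlt
    push_neg at hlt
    -- choose ξ
    obtain ⟨ξ, hξR⟩ : ∃ ξ : EuclideanSpace ℝ (Fin n),
        a * ‖ξ‖ ^ 2 - c * (⟪u₁, ξ⟫ - ⟪u₂, ξ⟫) ^ 2 < 0 := by
      by_cases hd : u₂ = u₁
      · refine ⟨EuclideanSpace.single ⟨0, hn⟩ 1, ?_⟩
        have hnorm : ‖(EuclideanSpace.single (⟨0, hn⟩ : Fin n) (1:ℝ))‖ = 1 := by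
          simp [EuclideanSpace.norm_single]
        have ha : a < 0 := by
          have h0 : ‖u₂ - u₁‖ = 0 := by simp [hd]
          rw [h0] at hlt
          norm_num at hlt
          exact hlt
        rw [hd, hnorm]
        nlinarith
      · refine ⟨u₂ - u₁, ?_⟩
        have hip : ⟪u₁, u₂ - u₁⟫ - ⟪u₂, u₂ - u₁⟫ = -‖u₂ - u₁‖ ^ 2 := by
          rw [← inner_sub_left, ← neg_sub u₂ u₁, inner_neg_left, real_inner_self_eq_norm_sq]
        rw [hip]
        have hdn : 0 < ‖u₂ - u₁‖ := by
          simpa [sub_eq_zero] using norm_pos_iff.2 (sub_ne_zero.2 hd)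
        have h5 : (a - c * ‖u₂ - u₁‖ ^ 2) * ‖u₂ - u₁‖ ^ 2 < 0 :=
          mul_neg_of_neg_of_pos hlt (by positivity)
        nlinarith [h5]
    set p : ℝ := ⟪u₁, ξ⟫
    set q : ℝ := ⟪u₂, ξ⟫
    set s : ℝ := ‖ξ‖ ^ 2
    set R : ℝ := a * s - c * (p - q) ^ 2 with hRdef
    have hR : R < 0 := hξR
    set m : ℝ := (A * p + B * q) / (A + B)
    set t : ℝ := -(R / (A + B)) with htdef
    have ht : 0 < t := by
      rw [htdef]
      have : R / (A + B) < 0 := div_neg_of_neg_of_pos hR hABpos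
      linarith
    set ω : ℂ := (m : ℂ) + Complex.I * (Real.sqrt t : ℝ) with hωdef
    have hω2 : (ω - (m : ℂ)) ^ 2 = ((R / (A + B) : ℝ) : ℂ) := by
      have hsub : ω - (m : ℂ) = Complex.I * ((Real.sqrt t : ℝ) : ℂ) := by
        rw [hωdef]; ring
      rw [hsub, mul_pow, Complex.I_sq]
      have hst : ((Real.sqrt t : ℝ) : ℂ) ^ 2 = ((t : ℝ) : ℂ) := by
        rw [← Complex.ofReal_pow, Real.sq_sqrt ht.le]
      rw [hst, htdef]
      push_cast
      ring
    have heq : ((A : ℝ) : ℂ) * (ω - (p : ℂ)) ^ 2 + ((B : ℝ) : ℂ) * (ω - (q : ℂ)) ^ 2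
        - ((a * s : ℝ) : ℂ) = 0 := by
      rw [quad_identity A B p q a s hA hB ω]
      have : ((a * s - A * B / (A + B) * (p - q) ^ 2) / (A + B) : ℝ) = R / (A + B) := by
        rw [hRdef, hcdef]
      rw [this, ← hω2]
      ring
    have him := h1 ξ ω heq
    have : ω.im = Real.sqrt t := by simp [hωdef]
    rw [this] at him
    exact absurd him (ne_of_gt (Real.sqrt_pos.2 ht))
  · intro h2 ξ ω heq
    set p : ℝ := ⟪u₁, ξ⟫
    set q : ℝ := ⟪u₂, ξ⟫
    have hcs : (q - p) ^ 2 ≤ ‖u₂ - u₁‖ ^ 2 * ‖ξ‖ ^ 2 := by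
      have h := abs_real_inner_le_norm (u₂ - u₁) ξ
      have hqp : ⟪u₂ - u₁, ξ⟫ = q - p := by rw [inner_sub_left]
      rw [hqp] at h
      have h' := mul_le_mul h h (abs_nonneg _) (by positivity)
      nlinarith [abs_mul_abs_self (q - p), h']
    set s : ℝ := ‖ξ‖ ^ 2
    have hs : 0 ≤ s := by positivity
    set R : ℝ := a * s - c * (p - q) ^ 2 with hRdef
    have hR : 0 ≤ R := by
      have h1 : (p - q) ^ 2 = (q - p) ^ 2 := by ring
      rw [hRdef, h1]
      nlinarith [hcpos]
    set m : ℝ := (A * p + B * q) / (A + B)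
    have key : (ω - (m : ℂ)) ^ 2 = ((R / (A + B) : ℝ) : ℂ) := by
      have hid := quad_identity A B p q a s hA hB ω
      rw [heq] at hid
      have hAB' : ((A + B : ℝ) : ℂ) ≠ 0 := by
        exact_mod_cast (ne_of_gt hABpos)
      have := (mul_eq_zero.1 hid.symm).resolve_left hAB'
      have hRR : ((a * s - A * B / (A + B) * (p - q) ^ 2) / (A + B) : ℝ) = R / (A + B) := by
        rw [hRdef, hcdef]
      rw [hRR] at this
      linear_combination this
    have him := sq_eq_real_nonneg_im (ω - (m : ℂ)) (R / (A + B))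
      (div_nonneg hR hABpos.le) key
    simpa using him
end

section
/- Let ρ₁, ρ₂, H₁, H₂, α₁, α₂ be positive real numbers, a ∈ ℝ, and u₁, u₂ ∈ ℝⁿ with v := u₂ − u₁ ≠ 0, and suppose a − (ρ₁ρ₂/(ρ₁H₂α₂ + ρ₂H₁α₁)) |v|² < 0. For t > 0 set ξ_t = t·v. Then for every t > 0 the quadratic polynomial in ω, (ρ₁/(H₁α₁)) (ω − u₁·ξ_t)² + (ρ₂/(H₂α₂)) (ω − u₂·ξ_t)² − a|ξ_t|², has two non-real complex conjugate roots, and the absolute value of their imaginary parts tends to +∞ as t → +∞. -/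
open scoped RealInnerProductSpace

/-- Kelvin–Helmholtz-type instability of the Kakinuma model when the stability condition is
violated: along `ξ_t = t v` with `v = u₂ − u₁`, the frozen-coefficient dispersion relation has
two non-real complex conjugate roots whose imaginary parts blow up as `t → +∞`. -/
theorem stmt_11 (n : ℕ) (hn : 1 ≤ n) (ρ₁ ρ₂ H₁ H₂ α₁ α₂ : ℝ)
    (hρ₁ : 0 < ρ₁) (hρ₂ : 0 < ρ₂) (hH₁ : 0 < H₁) (hH₂ : 0 < H₂)
    (hα₁ : 0 < α₁) (hα₂ : 0 < α₂) (a : ℝ) (u₁ u₂ : EuclideanSpace ℝ (Fin n))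
    (hv : u₂ - u₁ ≠ 0)
    (hunstable : a - ρ₁ * ρ₂ / (ρ₁ * H₂ * α₂ + ρ₂ * H₁ * α₁) * ‖u₂ - u₁‖ ^ 2 < 0) :
    ∃ ω : ℝ → ℂ,
      (∀ t : ℝ, 0 < t →
        (ω t).im ≠ 0 ∧
        ∀ z : ℂ,
          ((ρ₁ / (H₁ * α₁) : ℝ) : ℂ)
              * (z - ((⟪u₁, (t • (u₂ - u₁) : EuclideanSpace ℝ (Fin n))⟫ : ℝ) : ℂ)) ^ 2
            + ((ρ₂ / (H₂ * α₂) : ℝ) : ℂ)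
              * (z - ((⟪u₂, (t • (u₂ - u₁) : EuclideanSpace ℝ (Fin n))⟫ : ℝ) : ℂ)) ^ 2
            - ((a * ‖(t • (u₂ - u₁) : EuclideanSpace ℝ (Fin n))‖ ^ 2 : ℝ) : ℂ) = 0
          ↔ (z = ω t ∨ z = (starRingEnd ℂ) (ω t)))
      ∧ Filter.Tendsto (fun t => |(ω t).im|) Filter.atTop Filter.atTop := by
  set v : EuclideanSpace ℝ (Fin n) := u₂ - u₁ with hvdef
  set c₁ : ℝ := ρ₁ / (H₁ * α₁) with hc₁def
  set c₂ : ℝ := ρ₂ / (H₂ * α₂) with hc₂def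
  have hc₁ : 0 < c₁ := div_pos hρ₁ (by positivity)
  have hc₂ : 0 < c₂ := div_pos hρ₂ (by positivity)
  have hc : (0:ℝ) < c₁ + c₂ := by linarith
  have hcne : (c₁ + c₂ : ℝ) ≠ 0 := ne_of_gt hc
  set p : ℝ := ⟪u₁, v⟫ with hpdef
  set q : ℝ := ⟪u₂, v⟫ with hqdef
  set N : ℝ := ‖v‖ ^ 2 with hNdef
  have hN : 0 < N := by
    have := norm_pos_iff.mpr hv
    positivity
  have hqp : q - p = N := by
    rw [hpdef, hqdef, hNdef, ← inner_sub_left, hvdef, real_inner_self_eq_norm_sq]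
  set Cc : ℝ := c₁ * c₂ / (c₁ + c₂) * N - a with hCcdef
  have hfrac : c₁ * c₂ / (c₁ + c₂) = ρ₁ * ρ₂ / (ρ₁ * H₂ * α₂ + ρ₂ * H₁ * α₁) := by
    rw [hc₁def, hc₂def]
    have hd : (ρ₁ * H₂ * α₂ + ρ₂ * H₁ * α₁) ≠ 0 := by positivity
    field_simp
  have hCc : 0 < Cc := by
    rw [hCcdef, hfrac]; linarith
  set s : ℝ := Real.sqrt (N * Cc / (c₁ + c₂)) with hsdef
  have hs : 0 < s := Real.sqrt_pos.mpr (by positivity)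
  have hs2 : s ^ 2 = N * Cc / (c₁ + c₂) := Real.sq_sqrt (by positivity)
  set m : ℝ := (c₁ * p + c₂ * q) / (c₁ + c₂) with hmdef
  have hm : m * (c₁ + c₂) = c₁ * p + c₂ * q := by
    rw [hmdef]; field_simp
  have hs2' : s ^ 2 * (c₁ + c₂) = N * Cc := by
    rw [hs2]; field_simp
  have hkey : (c₁ + c₂) * (c₁ * p ^ 2 + c₂ * q ^ 2 - a * N) =
      (c₁ * p + c₂ * q) ^ 2 + (c₁ + c₂) * N * Cc := by
    have hCc' : Cc * (c₁ + c₂) = c₁ * c₂ * N - a * (c₁ + c₂) := by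
      rw [hCcdef]; field_simp
    linear_combination (-N) * hCc' + c₁ * c₂ * (q - p + N) * hqp
  refine ⟨fun t => ((t * m : ℝ) : ℂ) + ((t * s : ℝ) : ℂ) * Complex.I, ?_, ?_⟩
  · intro t ht
    have him : (((t * m : ℝ) : ℂ) + ((t * s : ℝ) : ℂ) * Complex.I).im = t * s := by
      simp
    constructor
    · rw [him]; positivity
    · intro z
      have hinner1 : ⟪u₁, (t • v : EuclideanSpace ℝ (Fin n))⟫ = t * p := by
        rw [real_inner_smul_right]
      have hinner2 : ⟪u₂, (t • v : EuclideanSpace ℝ (Fin n))⟫ = t * q := by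
        rw [real_inner_smul_right]
      have hnorm : ‖(t • v : EuclideanSpace ℝ (Fin n))‖ ^ 2 = t ^ 2 * N := by
        rw [norm_smul, mul_pow, hNdef]; simp [sq_abs]
      rw [hinner1, hinner2, hnorm]
      have hconj : (starRingEnd ℂ) (((t * m : ℝ) : ℂ) + ((t * s : ℝ) : ℂ) * Complex.I)
          = ((t * m : ℝ) : ℂ) - ((t * s : ℝ) : ℂ) * Complex.I := by
        simp [Complex.ext_iff]
      have hfact : (c₁ : ℂ) * (z - ((t * p : ℝ) : ℂ)) ^ 2 + (c₂ : ℂ) * (z - ((t * q : ℝ) : ℂ)) ^ 2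
            - ((a * (t ^ 2 * N) : ℝ) : ℂ)
          = ((c₁ + c₂ : ℝ) : ℂ) * ((z - (((t * m : ℝ) : ℂ) + ((t * s : ℝ) : ℂ) * Complex.I))
              * (z - (((t * m : ℝ) : ℂ) - ((t * s : ℝ) : ℂ) * Complex.I))) := by
        have hmC : (m : ℂ) * ((c₁ : ℂ) + (c₂ : ℂ)) = (c₁ : ℂ) * (p : ℂ) + (c₂ : ℂ) * (q : ℂ) := by
          exact_mod_cast congrArg (fun x : ℝ => (x : ℂ)) hm
        have hsC : (s : ℂ) ^ 2 * ((c₁ : ℂ) + (c₂ : ℂ)) = (N : ℂ) * (Cc : ℂ) := by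
          exact_mod_cast congrArg (fun x : ℝ => (x : ℂ)) hs2'
        have hkC : ((c₁ : ℂ) + (c₂ : ℂ)) * ((c₁:ℂ) * (p:ℂ) ^ 2 + (c₂:ℂ) * (q:ℂ) ^ 2 - (a:ℂ) * (N:ℂ)) =
            ((c₁:ℂ) * (p:ℂ) + (c₂:ℂ) * (q:ℂ)) ^ 2 + ((c₁:ℂ) + (c₂:ℂ)) * (N:ℂ) * (Cc:ℂ) := by
          exact_mod_cast congrArg (fun x : ℝ => (x : ℂ)) hkey
        have hcCne : ((c₁ : ℂ) + (c₂ : ℂ)) ≠ 0 := by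
          exact_mod_cast (show ((c₁ + c₂ : ℝ) : ℂ) ≠ 0 from Complex.ofReal_ne_zero.mpr hcne)
        push_cast
        apply mul_left_cancel₀ hcCne
        linear_combination (2*(t:ℂ)*((c₁:ℂ)+(c₂:ℂ))*z
            - (t:ℂ)^2*((m:ℂ)*((c₁:ℂ)+(c₂:ℂ)) + ((c₁:ℂ)*(p:ℂ)+(c₂:ℂ)*(q:ℂ)))) * hmC
          + (t:ℂ)^2 * hkC
          + ((c₁:ℂ)+(c₂:ℂ))^2*(t:ℂ)^2*(s:ℂ)^2 * Complex.I_sq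
          - (t:ℂ)^2*((c₁:ℂ)+(c₂:ℂ)) * hsC
      rw [hconj, hfact]
      have hcCne : ((c₁ + c₂ : ℝ) : ℂ) ≠ 0 := Complex.ofReal_ne_zero.mpr hcne
      rw [mul_eq_zero, mul_eq_zero, sub_eq_zero, sub_eq_zero]
      tauto
  · have h1 : Filter.Tendsto (fun t : ℝ => t * s) Filter.atTop Filter.atTop :=
      Filter.Tendsto.atTop_mul_const hs Filter.tendsto_id
    have h2 : Filter.Tendsto (fun t : ℝ => |t * s|) Filter.atTop Filter.atTop :=
      Filter.tendsto_abs_atTop_atTop.comp h1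
    refine h2.congr (fun t => ?_)
    simp
end

section
/- Let A be a real symmetric positive definite (N+1)×(N+1) matrix and let Ã = [[0, 𝟙ᵀ],[−𝟙, A]] be the associated (N+2)×(N+2) matrix, where 𝟙 = (1,…,1)ᵀ ∈ ℝ^{N+1}. Then: (1) det Ã = det A · (𝟙ᵀ A⁻¹ 𝟙) > 0, so Ã is invertible; (2) the inverse has the block form Ã⁻¹ = [[q, rᵀ],[−r, Q]] with q ∈ ℝ, r ∈ ℝ^{N+1}, and Q a symmetric (N+1)×(N+1) matrix; (3) q = det A / det Ã > 0; (4) Q is positive semidefinite and Q𝟙 = 0. -/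
open Matrix


lemma vecMulVec_mulVec' {m : ℕ} (v w x : Fin m → ℝ) :
    vecMulVec v w *ᵥ x = (w ⬝ᵥ x) • v := by
  funext i
  simp only [vecMulVec, mulVec, dotProduct, of_apply, Pi.smul_apply, smul_eq_mul]
  rw [Finset.sum_mul]
  exact Finset.sum_congr rfl fun k _ => by ring

/-- Structure of the bordered matrix `Ã = [[0, 𝟙ᵀ], [−𝟙, A]]` for a symmetric positive
definite matrix `A`: `det Ã = det A · 𝟙ᵀA⁻¹𝟙 > 0`, the inverse has block form
`[[q, rᵀ], [−r, Q]]` with `Q` symmetric, `q = det A / det Ã > 0`, `Q` positive semidefinite,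
and `Q𝟙 = 0`. -/
theorem stmt_12 (N : ℕ) (A : Matrix (Fin (N + 1)) (Fin (N + 1)) ℝ) (hA : A.PosDef) :
    (tilde A).det
        = A.det * dotProduct (fun _ => (1 : ℝ)) (A⁻¹.mulVec fun _ => (1 : ℝ))
      ∧ 0 < (tilde A).det
      ∧ ∃ (q : ℝ) (r : Fin (N + 1) → ℝ) (Q : Matrix (Fin (N + 1)) (Fin (N + 1)) ℝ),
          (tilde A)⁻¹
              = Matrix.fromBlocks (Matrix.of fun _ _ => q) (Matrix.of fun _ j => r j)
                (Matrix.of fun i _ => -(r i)) Q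
            ∧ Q.IsSymm
            ∧ q = A.det / (tilde A).det
            ∧ 0 < q
            ∧ Q.PosSemidef
            ∧ Q.mulVec (fun _ => (1 : ℝ)) = 0 := by
  have hdet : IsUnit A.det := (ne_of_gt hA.det_pos).isUnit
  have : Invertible A := A.invertibleOfIsUnitDet hdet
  have hAB : A * A⁻¹ = 1 := A.mul_nonsing_inv hdet
  set B := A⁻¹ with hBdef
  have hB : B.PosDef := hA.inv
  have hBsymm : Bᵀ = B := hB.1
  set one : Fin (N + 1) → ℝ := fun _ => (1 : ℝ) with hone
  set v : Fin (N + 1) → ℝ := B *ᵥ one with hv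
  set s : ℝ := one ⬝ᵥ v with hs
  have hone_ne : one ≠ 0 := by
    intro h
    have := congrFun h 0
    simp [hone] at this
  have hs_pos : 0 < s := by
    have := hB.dotProduct_mulVec_pos hone_ne
    simpa [hs, hv] using this
  have hs_ne : s ≠ 0 := ne_of_gt hs_pos
  have hsum_v : ∑ k, v k = s := by
    simp [hs, dotProduct, hone]
  have hcolB : ∀ j, ∑ i, B i j = v j := by
    intro j
    have hh : ∀ i, B i j = B j i := fun i =>
      (congrFun (congrFun hBsymm j) i : Bᵀ j i = B j i)
    rw [Finset.sum_congr rfl fun i _ => hh i]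
    simp [hv, mulVec, dotProduct, hone]
  have hAv : A *ᵥ v = one := by
    rw [hv, mulVec_mulVec, hAB, one_mulVec]
  have honeB : one ᵥ* B = v := by
    rw [← mulVec_transpose, hBsymm, ← hv]
  set q : ℝ := s⁻¹ with hq
  set r : Fin (N + 1) → ℝ := fun i => -(s⁻¹ * v i) with hr
  set Q : Matrix (Fin (N + 1)) (Fin (N + 1)) ℝ := B - s⁻¹ • vecMulVec v v with hQ
  have hQone : Q *ᵥ one = 0 := by
    rw [hQ, sub_mulVec, smul_mulVec, vecMulVec_mulVec', dotProduct_comm, ← hs, ← hv,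
      smul_smul, inv_mul_cancel₀ hs_ne, one_smul, sub_self]
  have hQsymm : Q.IsSymm := by
    rw [Matrix.IsSymm, hQ, transpose_sub, hBsymm, transpose_smul]
    congr 1
    ext i j
    simp [vecMulVec_apply, mul_comm]
  have hdet_tilde : (tilde A).det = A.det * s := by
    rw [tilde, det_fromBlocks₂₂]
    congr 1
    rw [det_fin_one]
    have hinv : (⅟A : Matrix _ _ ℝ) = A⁻¹ := invOf_eq_nonsing_inv A
    simp only [hinv]
    simp [Matrix.mul_apply, Matrix.sub_apply, ← hBdef, hs, hv, dotProduct, mulVec, hone,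
      Finset.mul_sum, mul_comm]
    exact Finset.sum_comm
  have hdet_pos : 0 < (tilde A).det := by
    rw [hdet_tilde]; exact mul_pos hA.det_pos hs_pos
  refine ⟨by rw [hdet_tilde], hdet_pos, q, r, Q, ?_, hQsymm, ?_, inv_pos.mpr hs_pos, ?_, hQone⟩
  · -- inverse block form
    apply inv_eq_right_inv
    have h11 : (0 : Matrix (Fin 1) (Fin 1) ℝ) * ((Matrix.of fun _ _ => q) : Matrix (Fin 1) (Fin 1) ℝ)
        + ((Matrix.of fun _ _ => (1 : ℝ)) : Matrix (Fin 1) (Fin (N + 1)) ℝ)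
          * ((Matrix.of fun i _ => -(r i)) : Matrix (Fin (N + 1)) (Fin 1) ℝ) = 1 := by
      ext i j
      simp only [Matrix.zero_mul, Matrix.zero_apply, Matrix.add_apply, Matrix.mul_apply,
        of_apply, hr, neg_neg, one_mul]
      rw [← Finset.mul_sum, hsum_v, inv_mul_cancel₀ hs_ne]
      simp [Matrix.one_apply, Fin.ext_iff, Fin.val_eq_zero i, Fin.val_eq_zero j]
    have h12 : (0 : Matrix (Fin 1) (Fin 1) ℝ) * ((Matrix.of fun _ j => r j) : Matrix (Fin 1) (Fin (N + 1)) ℝ)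
        + ((Matrix.of fun _ _ => (1 : ℝ)) : Matrix (Fin 1) (Fin (N + 1)) ℝ) * Q = 0 := by
      ext i j
      simp only [Matrix.zero_mul, Matrix.zero_apply, Matrix.add_apply, Matrix.mul_apply,
        of_apply, one_mul, zero_add, hQ, Matrix.sub_apply, Matrix.smul_apply, vecMulVec_apply, smul_eq_mul]
      rw [Finset.sum_sub_distrib, hcolB]
      have hsv : (∑ i, s⁻¹ * (v i * v j)) = s⁻¹ * (∑ i, v i) * v j := by
        rw [Finset.mul_sum, Finset.sum_mul]
        exact Finset.sum_congr rfl fun k _ => by ring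
      rw [hsv, hsum_v, inv_mul_cancel₀ hs_ne, one_mul, sub_self]
    have h21 : ((Matrix.of fun _ _ => (-1 : ℝ)) : Matrix (Fin (N + 1)) (Fin 1) ℝ)
          * ((Matrix.of fun _ _ => q) : Matrix (Fin 1) (Fin 1) ℝ)
        + A * ((Matrix.of fun i _ => -(r i)) : Matrix (Fin (N + 1)) (Fin 1) ℝ) = 0 := by
      ext i j
      simp only [Matrix.add_apply, Matrix.mul_apply, of_apply, hr, hq, neg_neg,
        Matrix.zero_apply]
      have h1 : ∑ k, A i k * (s⁻¹ * v k) = s⁻¹ * (A *ᵥ v) i := by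
        simp only [mulVec, dotProduct, Finset.mul_sum]
        exact Finset.sum_congr rfl fun k _ => by ring
      rw [h1, hAv]
      simp [hone, inv_mul_cancel₀ hs_ne]
    have h22 : ((Matrix.of fun _ _ => (-1 : ℝ)) : Matrix (Fin (N + 1)) (Fin 1) ℝ)
          * ((Matrix.of fun _ j => r j) : Matrix (Fin 1) (Fin (N + 1)) ℝ) + A * Q = 1 := by
      have hAQ : A * Q = 1 - s⁻¹ • vecMulVec one v := by
        rw [hQ, Matrix.mul_sub, hAB, Matrix.mul_smul]
        congr 2
        ext i j
        simp only [Matrix.mul_apply, vecMulVec_apply]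
        rw [show (∑ k, A i k * (v k * v j)) = (∑ k, A i k * v k) * v j from by
          rw [Finset.sum_mul]; exact Finset.sum_congr rfl fun k _ => by ring]
        have : (∑ k, A i k * v k) = (A *ᵥ v) i := rfl
        rw [this, hAv]
      ext i j
      simp only [Matrix.add_apply, hAQ, Matrix.sub_apply, Matrix.smul_apply,
        vecMulVec_apply, smul_eq_mul, Matrix.mul_apply, of_apply, hr, hone]
      simp [Finset.sum_neg_distrib]
    rw [tilde, fromBlocks_multiply, h11, h12, h21, h22, fromBlocks_one]
  · -- q = det A / det tilde
    rw [hdet_tilde, hq, div_mul_eq_div_div, div_self (ne_of_gt hA.det_pos), one_div]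
  · -- PosSemidef
    refine .of_dotProduct_mulVec_nonneg hQsymm fun x => ?_
    have hstar : (star x : Fin (N + 1) → ℝ) = x := by simp
    rw [hstar]
    set c : ℝ := s⁻¹ * (v ⬝ᵥ x) with hc
    set y : Fin (N + 1) → ℝ := x - c • one with hy
    have hyB : 0 ≤ y ⬝ᵥ B *ᵥ y := by
      have := hB.posSemidef.dotProduct_mulVec_nonneg y
      simpa using this
    have honeBx : one ⬝ᵥ B *ᵥ x = v ⬝ᵥ x := by
      rw [dotProduct_mulVec, honeB]
    have hxv : x ⬝ᵥ v = v ⬝ᵥ x := dotProduct_comm x v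
    have key : x ⬝ᵥ Q *ᵥ x = y ⬝ᵥ B *ᵥ y := by
      rw [hQ, sub_mulVec, smul_mulVec, vecMulVec_mulVec', dotProduct_sub,
        dotProduct_smul, dotProduct_smul, hxv, hy, sub_dotProduct, mulVec_sub,
        dotProduct_sub, dotProduct_sub, mulVec_smul, dotProduct_smul, dotProduct_smul,
        smul_dotProduct, smul_dotProduct]
      rw [honeBx]
      have h1 : x ⬝ᵥ B *ᵥ one = v ⬝ᵥ x := by rw [← hv, hxv]
      rw [h1]
      have h2 : one ⬝ᵥ B *ᵥ one = s := rfl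
      rw [h2, hc]
      field_simp
      simp only [smul_eq_mul, div_eq_mul_inv, one_mul]
      linear_combination (-(v ⬝ᵥ x) ^ 2 * s⁻¹) * inv_mul_cancel₀ hs_ne
    rw [key]
    exact hyB
end

section
/- Let A be a real symmetric positive definite (N+1)×(N+1) matrix, let Ã = [[0, 𝟙ᵀ],[−𝟙, A]] with 𝟙 = (1,…,1)ᵀ ∈ ℝ^{N+1}, set α = det A / det Ã, and let Q be the lower-right (N+1)×(N+1) block of Ã⁻¹ (so that Ã⁻¹ = [[q, rᵀ],[−r, Q]]). Then for every φ ∈ ℝ^{N+1}: φᵀ A φ = α (𝟙·φ)² + (Aφ)ᵀ Q (Aφ). -/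
/-- Decomposition identity for a symmetric positive definite matrix `A`:
`φᵀAφ = α (𝟙·φ)² + (Aφ)ᵀ Q (Aφ)`, where `α = det A / det Ã` and `Q` is the lower-right block
of `Ã⁻¹`. -/
theorem stmt_13 (N : ℕ) (A : Matrix (Fin (N + 1)) (Fin (N + 1)) ℝ) (hA : A.PosDef)
    (φ : Fin (N + 1) → ℝ) :
    dotProduct φ (A.mulVec φ)
      = (A.det / (tilde A).det) * (∑ i, φ i) ^ 2
        + dotProduct (A.mulVec φ)
            ((Matrix.toBlocks₂₂ ((tilde A)⁻¹)).mulVec (A.mulVec φ)) := by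
  classical
  have hAdet : IsUnit A.det := isUnit_iff_ne_zero.mpr (ne_of_gt hA.det_pos)
  letI : Invertible A := A.invertibleOfIsUnitDet hAdet
  have hinvA : ⅟A = A⁻¹ := Matrix.invOf_eq_nonsing_inv A
  set s : ℝ := ∑ i, ∑ j, A⁻¹ i j with hs
  -- positivity of s
  have hs_pos : 0 < s := by
    have h1 : (fun _ : Fin (N + 1) => (1 : ℝ)) ≠ 0 := by
      intro h
      have := congrFun h 0
      simp at this
    have := (hA.inv).dotProduct_mulVec_pos h1
    simpa [dotProduct, Matrix.mulVec, hs] using this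
  have hs_ne : s ≠ 0 := ne_of_gt hs_pos
  set B : Matrix (Fin 1) (Fin (N + 1)) ℝ := Matrix.of fun _ _ => (1 : ℝ) with hB
  set C : Matrix (Fin (N + 1)) (Fin 1) ℝ := Matrix.of fun _ _ => (-1 : ℝ) with hC
  have hS : (0 : Matrix (Fin 1) (Fin 1) ℝ) - B * ⅟A * C = Matrix.of fun _ _ => s := by
    ext i j
    simp [Matrix.mul_apply, hinvA, hB, hC, hs]
    exact Finset.sum_comm
  have hSone : ((0 : Matrix (Fin 1) (Fin 1) ℝ) - B * ⅟A * C) *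
      (Matrix.of fun _ _ => s⁻¹) = 1 := by
    rw [hS]
    ext i j
    simp [Matrix.mul_apply, Matrix.one_apply, mul_inv_cancel₀ hs_ne, Subsingleton.elim i j]
  letI instS : Invertible ((0 : Matrix (Fin 1) (Fin 1) ℝ) - B * ⅟A * C) :=
    ⟨Matrix.of fun _ _ => s⁻¹,
      by rw [hS]; ext i j; simp [Matrix.mul_apply, Matrix.one_apply,
        inv_mul_cancel₀ hs_ne, Subsingleton.elim i j],
      hSone⟩
  have hSinv : ⅟((0 : Matrix (Fin 1) (Fin 1) ℝ) - B * ⅟A * C)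
      = Matrix.of fun _ _ => s⁻¹ := invOf_eq_right_inv hSone
  letI instT : Invertible (Matrix.fromBlocks 0 B C A) := Matrix.fromBlocks₂₂Invertible 0 B C A
  -- the determinant
  have hdet : (tilde A).det = A.det * s := by
    rw [tilde, Matrix.det_fromBlocks₂₂, hS]
    simp [Matrix.det_fin_one]
  -- the lower-right block of the inverse
  have hQ : Matrix.toBlocks₂₂ ((tilde A)⁻¹)
      = ⅟A + ⅟A * C * ⅟((0 : Matrix (Fin 1) (Fin 1) ℝ) - B * ⅟A * C) * B * ⅟A := by
    have h1 : (tilde A)⁻¹ = ⅟(Matrix.fromBlocks 0 B C A) := by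
      rw [Matrix.invOf_eq_nonsing_inv]; rfl
    rw [h1, Matrix.invOf_fromBlocks₂₂_eq, Matrix.toBlocks_fromBlocks₂₂]
  have hAsymm : A.transpose = A := by
    have := hA.isHermitian
    simpa [Matrix.IsHermitian, Matrix.conjTranspose_eq_transpose_of_trivial] using this
  set u : Fin (N + 1) → ℝ := A⁻¹.mulVec (fun _ => 1) with hu
  -- key dot products
  have hAinvv : A⁻¹.mulVec (A.mulVec φ) = φ := by
    rw [Matrix.mulVec_mulVec, Matrix.nonsing_inv_mul A hAdet, Matrix.one_mulVec]
  have huv : dotProduct (A.mulVec φ) u = ∑ i, φ i := by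
    rw [dotProduct_comm, hu, Matrix.dotProduct_mulVec, ← Matrix.mulVec_transpose,
      Matrix.mulVec_mulVec, hAsymm, Matrix.mul_nonsing_inv A hAdet, Matrix.one_mulVec]
    simp [dotProduct]
  -- compute the second mulVec term
  have hw : (⅟A * C * ⅟((0 : Matrix (Fin 1) (Fin 1) ℝ) - B * ⅟A * C) * B * ⅟A).mulVec
      (A.mulVec φ) = (-(s⁻¹ * ∑ i, φ i)) • u := by
    rw [hSinv, hinvA]
    rw [← Matrix.mulVec_mulVec, hAinvv, ← Matrix.mulVec_mulVec, ← Matrix.mulVec_mulVec]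
    have hBφ : B.mulVec φ = fun _ => ∑ i, φ i := by
      ext i; simp [Matrix.mulVec, dotProduct, hB]
    rw [hBφ]
    have hSφ : (Matrix.of fun _ _ => s⁻¹).mulVec (fun _ : Fin 1 => ∑ i, φ i)
        = fun _ : Fin 1 => s⁻¹ * ∑ i, φ i := by
      ext i; simp [Matrix.mulVec, dotProduct]
    rw [hSφ, ← Matrix.mulVec_mulVec]
    have hCφ : C.mulVec (fun _ : Fin 1 => s⁻¹ * ∑ i, φ i)
        = fun _ : Fin (N + 1) => -(s⁻¹ * ∑ i, φ i) := by
      ext i; simp [Matrix.mulVec, dotProduct, hC]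
    rw [hCφ]
    have : (fun _ : Fin (N + 1) => -(s⁻¹ * ∑ i, φ i))
        = (-(s⁻¹ * ∑ i, φ i)) • (fun _ : Fin (N + 1) => (1 : ℝ)) := by
      ext i; simp
    rw [this, Matrix.mulVec_smul, hu]
  -- put it together
  have hinvAv : (⅟A).mulVec (A.mulVec φ) = φ := by rw [hinvA]; exact hAinvv
  rw [hQ, Matrix.add_mulVec, dotProduct_add, hinvAv, hw, hdet,
    dotProduct_smul, huv, dotProduct_comm (A.mulVec φ) φ]
  have hdet_ne : A.det ≠ 0 := ne_of_gt hA.det_pos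
  field_simp
  linear_combination (∑ i, φ i) ^ 2 * mul_inv_cancel₀ hs_ne
end

section
/- Let ρ₁, ρ₂, H₁, H₂, α₁, α₂ be positive real numbers, a ∈ ℝ, b ≥ 0, and set s = ρ₁H₂α₂ + ρ₂H₁α₁. Define the real symmetric 3×3 matrix 𝔄₀ = [[a, −ρ₁ρ₂H₁α₁ b/s, −ρ₁ρ₂H₂α₂ b/s],[−ρ₁ρ₂H₁α₁ b/s, ρ₁H₁α₁, 0],[−ρ₁ρ₂H₂α₂ b/s, 0, ρ₂H₂α₂]]. Then det 𝔄₀ = (ρ₁H₁α₁)(ρ₂H₂α₂)( a − (ρ₁ρ₂/s) b² ), and 𝔄₀ is positive definite if and only if a − (ρ₁ρ₂/s) b² > 0. -/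
/-- Determinant and positive-definiteness criterion for the 3×3 matrix `𝔄₀` arising in the
energy estimate for the linearized Kakinuma model; its positivity is exactly the strict
stability condition. -/
theorem stmt_15 (ρ₁ ρ₂ H₁ H₂ α₁ α₂ : ℝ)
    (hρ₁ : 0 < ρ₁) (hρ₂ : 0 < ρ₂) (hH₁ : 0 < H₁) (hH₂ : 0 < H₂)
    (hα₁ : 0 < α₁) (hα₂ : 0 < α₂) (a b : ℝ) (hb : 0 ≤ b) :
    (Matrix.det
        !![a, -(ρ₁ * ρ₂ * H₁ * α₁ * b / (ρ₁ * H₂ * α₂ + ρ₂ * H₁ * α₁)),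
            -(ρ₁ * ρ₂ * H₂ * α₂ * b / (ρ₁ * H₂ * α₂ + ρ₂ * H₁ * α₁));
          -(ρ₁ * ρ₂ * H₁ * α₁ * b / (ρ₁ * H₂ * α₂ + ρ₂ * H₁ * α₁)), ρ₁ * H₁ * α₁, 0;
          -(ρ₁ * ρ₂ * H₂ * α₂ * b / (ρ₁ * H₂ * α₂ + ρ₂ * H₁ * α₁)), 0, ρ₂ * H₂ * α₂]
      = (ρ₁ * H₁ * α₁) * (ρ₂ * H₂ * α₂)
          * (a - ρ₁ * ρ₂ / (ρ₁ * H₂ * α₂ + ρ₂ * H₁ * α₁) * b ^ 2))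
    ∧ (Matrix.PosDef
        !![a, -(ρ₁ * ρ₂ * H₁ * α₁ * b / (ρ₁ * H₂ * α₂ + ρ₂ * H₁ * α₁)),
            -(ρ₁ * ρ₂ * H₂ * α₂ * b / (ρ₁ * H₂ * α₂ + ρ₂ * H₁ * α₁));
          -(ρ₁ * ρ₂ * H₁ * α₁ * b / (ρ₁ * H₂ * α₂ + ρ₂ * H₁ * α₁)), ρ₁ * H₁ * α₁, 0;
          -(ρ₁ * ρ₂ * H₂ * α₂ * b / (ρ₁ * H₂ * α₂ + ρ₂ * H₁ * α₁)), 0, ρ₂ * H₂ * α₂]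
      ↔ 0 < a - ρ₁ * ρ₂ / (ρ₁ * H₂ * α₂ + ρ₂ * H₁ * α₁) * b ^ 2) := by

  have hs : (0:ℝ) < ρ₁ * H₂ * α₂ + ρ₂ * H₁ * α₁ := by positivity
  have hdet : Matrix.det
        !![a, -(ρ₁ * ρ₂ * H₁ * α₁ * b / (ρ₁ * H₂ * α₂ + ρ₂ * H₁ * α₁)),
            -(ρ₁ * ρ₂ * H₂ * α₂ * b / (ρ₁ * H₂ * α₂ + ρ₂ * H₁ * α₁));
          -(ρ₁ * ρ₂ * H₁ * α₁ * b / (ρ₁ * H₂ * α₂ + ρ₂ * H₁ * α₁)), ρ₁ * H₁ * α₁, 0;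
          -(ρ₁ * ρ₂ * H₂ * α₂ * b / (ρ₁ * H₂ * α₂ + ρ₂ * H₁ * α₁)), 0, ρ₂ * H₂ * α₂]
      = (ρ₁ * H₁ * α₁) * (ρ₂ * H₂ * α₂)
          * (a - ρ₁ * ρ₂ / (ρ₁ * H₂ * α₂ + ρ₂ * H₁ * α₁) * b ^ 2) := by
    simp [Matrix.det_fin_three]
    field_simp
    ring
  refine ⟨hdet, ?_, ?_⟩
  · intro h
    have h1 := h.det_pos
    rw [hdet] at h1
    have h2 : (0:ℝ) < (ρ₁ * H₁ * α₁) * (ρ₂ * H₂ * α₂) := by positivity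
    nlinarith
  · intro ht
    refine Matrix.PosDef.of_dotProduct_mulVec_pos ?_ ?_
    · ext i j
      fin_cases i <;> fin_cases j <;> rfl
    · intro x hx
      have hx' : x 0 ≠ 0 ∨ x 1 ≠ 0 ∨ x 2 ≠ 0 := by
        by_contra hc
        push_neg at hc
        exact hx (funext fun i => by fin_cases i <;> simp [hc.1, hc.2.1, hc.2.2])
      simp only [dotProduct, Matrix.mulVec, Fin.sum_univ_three, star_trivial,
        Matrix.cons_val', Matrix.cons_val_zero, Matrix.cons_val_one, Matrix.head_cons,
        Matrix.empty_val', Matrix.cons_val_fin_one, Matrix.head_fin_const, Matrix.cons_val_two,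
        Matrix.tail_cons, zero_mul, add_zero, Matrix.of_apply, mul_zero]
      set s := ρ₁ * H₂ * α₂ + ρ₂ * H₁ * α₁ with hsdef
      set X := x 0 with hX; set Y := x 1 with hY; set Z := x 2 with hZ
      have key : X * (a * X + -(ρ₁ * ρ₂ * H₁ * α₁ * b / s) * Y + -(ρ₁ * ρ₂ * H₂ * α₂ * b / s) * Z)
          + Y * (-(ρ₁ * ρ₂ * H₁ * α₁ * b / s) * X + ρ₁ * H₁ * α₁ * Y)
          + Z * (-(ρ₁ * ρ₂ * H₂ * α₂ * b / s) * X + ρ₂ * H₂ * α₂ * Z)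
          = (a - ρ₁ * ρ₂ / s * b ^ 2) * X ^ 2
            + ρ₁ * H₁ * α₁ * (Y - ρ₂ * b / s * X) ^ 2
            + ρ₂ * H₂ * α₂ * (Z - ρ₁ * b / s * X) ^ 2 := by
        field_simp
        ring
      rw [key]
      have t2 : 0 ≤ ρ₁ * H₁ * α₁ * (Y - ρ₂ * b / s * X) ^ 2 := by positivity
      have t3 : 0 ≤ ρ₂ * H₂ * α₂ * (Z - ρ₁ * b / s * X) ^ 2 := by positivity
      have t1 : 0 ≤ (a - ρ₁ * ρ₂ / s * b ^ 2) * X ^ 2 := by positivity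
      by_cases h0 : X = 0
      · rcases hx' with h | h | h
        · exact absurd h0 h
        · have : 0 < ρ₁ * H₁ * α₁ * (Y - ρ₂ * b / s * X) ^ 2 := by
            have : Y - ρ₂ * b / s * X ≠ 0 := by rw [h0]; simpa using h
            positivity
          linarith
        · have : 0 < ρ₂ * H₂ * α₂ * (Z - ρ₁ * b / s * X) ^ 2 := by
            have : Z - ρ₁ * b / s * X ≠ 0 := by rw [h0]; simpa using h
            positivity
          linarith
      · have : 0 < (a - ρ₁ * ρ₂ / s * b ^ 2) * X ^ 2 := by positivity
        linarith
end
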